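/- Let 𝕄 = (M_1, …, M_k) be a tuple of matroids with M_i = (E_i, 𝓑_i), and let K be the set of coloops of the matroid union ⋁_{i=1}^k M_i. For any two feasible basis sequences 𝔹 = (B_1, …, B_k) and 𝔹' = (B'_1, …, B'_k) of 𝕄, the sequence 𝔹 is reconfigurable to 𝔹' if and only if K ∩ B_i = K ∩ B'_i for every i ∈ {1, …, k}. -/

import Mathlib

universe u

/-- A matroid given by its finite ground set and its nonempty family of bases
satisfying the basis exchange axiom. -/
structure FinMatroid (α : Type u) [DecidableEq α] where
  E : Finset α
  Bases : Finset α → Prop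
  bases_subset_ground : ∀ B, Bases B → B ⊆ E
  bases_nonempty : ∃ B, Bases B
  basis_exchange : ∀ B B', Bases B → Bases B' → ∀ x ∈ B, x ∉ B' →
    ∃ y ∈ B', y ∉ B ∧ Bases (insert y (B.erase x))

variable {α : Type u} [DecidableEq α] {k : ℕ}

namespace FinMatroid

variable {α : Type u} [DecidableEq α]

theorem mem_ground_of_mem_basis (M : FinMatroid α) {B : Finset α} (hB : M.Bases B)
    {x : α} (hx : x ∈ B) : x ∈ M.E := M.bases_subset_ground B hB hx

/-- All bases have the same cardinality. -/
theorem bases_card_eq (M : FinMatroid α) :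
    ∀ (n : ℕ) (B B' : Finset α), (B \ B').card = n → M.Bases B → M.Bases B' →
      B.card = B'.card := by
  intro n
  induction n with
  | zero =>
    intro B B' h hB hB'
    have hsub : B ⊆ B' := by
      intro x hx
      by_contra hx'
      have hmem : x ∈ B \ B' := Finset.mem_sdiff.2 ⟨hx, hx'⟩
      rw [Finset.card_eq_zero.1 h] at hmem
      exact absurd hmem (Finset.notMem_empty x)
    have hsub' : B' ⊆ B := by
      intro x hx
      by_contra hx'
      obtain ⟨y, hy, hy', -⟩ := M.basis_exchange B' B hB' hB x hx hx'
      exact hy' (hsub hy)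
    rw [Finset.Subset.antisymm hsub hsub']
  | succ n ih =>
    intro B B' h hB hB'
    have hne : (B \ B').Nonempty := by
      rw [← Finset.card_pos, h]; omega
    obtain ⟨x, hx⟩ := hne
    obtain ⟨hxB, hxB'⟩ := Finset.mem_sdiff.1 hx
    obtain ⟨y, hyB', hyB, hB1⟩ := M.basis_exchange B B' hB hB' x hxB hxB'
    have hcard : (insert y (B.erase x)).card = B.card := by
      rw [Finset.card_insert_of_notMem (fun hc => hyB (Finset.mem_of_mem_erase hc)),
        Finset.card_erase_of_mem hxB]
      have : 0 < B.card := Finset.card_pos.2 ⟨x, hxB⟩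
      omega
    have hsd : (insert y (B.erase x)) \ B' = (B \ B').erase x := by
      ext z
      simp only [Finset.mem_sdiff, Finset.mem_insert, Finset.mem_erase]
      constructor
      · rintro ⟨hz1 | hz2, hz3⟩
        · exact absurd (hz1 ▸ hyB') hz3
        · exact ⟨hz2.1, hz2.2, hz3⟩
      · rintro ⟨hz1, hz2, hz3⟩
        exact ⟨Or.inr ⟨hz1, hz2⟩, hz3⟩
    have := ih (insert y (B.erase x)) B' (by rw [hsd, Finset.card_erase_of_mem hx, h]; omega) hB1 hB'
    omega

theorem card_eq_of_bases (M : FinMatroid α) {B B' : Finset α} (hB : M.Bases B)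
    (hB' : M.Bases B') : B.card = B'.card :=
  M.bases_card_eq _ B B' rfl hB hB'

/-- Independent sets: subsets of bases. -/
def Indep (M : FinMatroid α) (I : Finset α) : Prop := ∃ B, M.Bases B ∧ I ⊆ B

theorem Indep.subset {M : FinMatroid α} {I J : Finset α} (hI : M.Indep I) (h : J ⊆ I) :
    M.Indep J := by obtain ⟨B, hB, hIB⟩ := hI; exact ⟨B, hB, h.trans hIB⟩

theorem Bases.indep {M : FinMatroid α} {B : Finset α} (hB : M.Bases B) : M.Indep B :=
  ⟨B, hB, Finset.Subset.refl B⟩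

theorem indep_card_le {M : FinMatroid α} {I B : Finset α} (hI : M.Indep I)
    (hB : M.Bases B) : I.card ≤ B.card := by
  obtain ⟨B', hB', hIB'⟩ := hI
  exact (Finset.card_le_card hIB').trans (M.card_eq_of_bases hB' hB).le

/-- An independent set of full cardinality is a basis. -/
theorem basis_of_indep_card {M : FinMatroid α} {I B : Finset α} (hI : M.Indep I)
    (hB : M.Bases B) (h : B.card ≤ I.card) : M.Bases I := by
  obtain ⟨B', hB', hIB'⟩ := hI
  have : I = B' := Finset.eq_of_subset_of_card_le hIB'
    (by rw [M.card_eq_of_bases hB' hB]; exact h)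
  rw [this]; exact hB'

/-- Extend an independent subset of a basis to a basis within `I ∪ B'`. -/
theorem exists_basis_subset_union (M : FinMatroid α) :
    ∀ (n : ℕ) (B B' I : Finset α), (B \ (I ∪ B')).card = n → M.Bases B → M.Bases B' →
      I ⊆ B → ∃ B'', M.Bases B'' ∧ I ⊆ B'' ∧ B'' ⊆ I ∪ B' := by
  intro n
  induction n with
  | zero =>
    intro B B' I h hB hB' hI
    refine ⟨B, hB, hI, ?_⟩
    intro x hx
    by_contra hx'
    have : x ∈ B \ (I ∪ B') := Finset.mem_sdiff.2 ⟨hx, hx'⟩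
    rw [Finset.card_eq_zero.1 h] at this
    exact absurd this (Finset.notMem_empty x)
  | succ n ih =>
    intro B B' I h hB hB' hI
    have hne : (B \ (I ∪ B')).Nonempty := by rw [← Finset.card_pos, h]; omega
    obtain ⟨x, hx⟩ := hne
    obtain ⟨hxB, hxI⟩ := Finset.mem_sdiff.1 hx
    rw [Finset.mem_union] at hxI
    push_neg at hxI
    obtain ⟨y, hyB', hyB, hB1⟩ := M.basis_exchange B B' hB hB' x hxB hxI.2
    have hIB1 : I ⊆ insert y (B.erase x) := by
      intro z hz
      exact Finset.mem_insert_of_mem (Finset.mem_erase.2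
        ⟨fun hc => hxI.1 (hc ▸ hz), hI hz⟩)
    have hsd : (insert y (B.erase x)) \ (I ∪ B') = (B \ (I ∪ B')).erase x := by
      ext z
      simp only [Finset.mem_sdiff, Finset.mem_insert, Finset.mem_erase, Finset.mem_union]
      constructor
      · rintro ⟨hz1 | hz2, hz3⟩
        · exact absurd (Or.inr (hz1 ▸ hyB')) hz3
        · exact ⟨hz2.1, hz2.2, hz3⟩
      · rintro ⟨hz1, hz2, hz3⟩
        exact ⟨Or.inr ⟨hz1, hz2⟩, hz3⟩
    exact ih (insert y (B.erase x)) B' I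
      (by rw [hsd, Finset.card_erase_of_mem hx, h]; omega) hB1 hB' hIB1

/-- Augmentation property for independent sets. -/
theorem indep_exchange {M : FinMatroid α} {I J : Finset α} (hI : M.Indep I) (hJ : M.Indep J)
    (hcard : I.card < J.card) : ∃ y ∈ J, y ∉ I ∧ M.Indep (insert y I) := by
  obtain ⟨B, hB, hIB⟩ := hI
  obtain ⟨B', hB', hJB'⟩ := hJ
  obtain ⟨B'', hB'', hIB'', hB''sub⟩ := M.exists_basis_subset_union _ B B' I rfl hB hB' hIB
  by_contra hcon
  push_neg at hcon
  -- every y ∈ B'' ∩ J with y ∉ I would give a contradiction, so B'' ∩ J ⊆ I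
  have hBJ : ∀ y ∈ B'', y ∈ J → y ∈ I := by
    intro y hy hyJ
    by_contra hyI
    exact absurd ⟨B'', hB'', Finset.insert_subset hy hIB''⟩ (hcon y hyJ hyI)
  have hsub : B'' \ I ⊆ B' \ J := by
    intro z hz
    obtain ⟨hz1, hz2⟩ := Finset.mem_sdiff.1 hz
    have hzB' : z ∈ B' := by
      rcases Finset.mem_union.1 (hB''sub hz1) with h | h
      · exact absurd h hz2
      · exact h
    refine Finset.mem_sdiff.2 ⟨hzB', fun hzJ => hz2 (hBJ z hz1 hzJ)⟩
  have h1 : (B'' \ I).card = B''.card - I.card := by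
    rw [Finset.card_sdiff_of_subset hIB'']
  have h2 : (B' \ J).card = B'.card - J.card := by
    rw [Finset.card_sdiff_of_subset hJB']
  have h3 : B''.card = B'.card := M.card_eq_of_bases hB'' hB'
  have h4 : I.card ≤ B''.card := Finset.card_le_card hIB''
  have h5 : J.card ≤ B'.card := Finset.card_le_card hJB'
  have := Finset.card_le_card hsub
  omega

/-- Any two maximal independent subsets of `X` have the same size;
here: an independent subset of `X` has size at most that of a maximal one. -/
theorem card_le_of_maximal_indep {M : FinMatroid α} {I I' X : Finset α} (hI : M.Indep I)
    (hIX : I ⊆ X) (hmax : ∀ J, M.Indep J → I ⊆ J → J ⊆ X → J = I)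
    (hI' : M.Indep I') (hI'X : I' ⊆ X) : I'.card ≤ I.card := by
  by_contra h
  push_neg at h
  obtain ⟨y, hyI', hyI, hind⟩ := indep_exchange hI hI' h
  have := hmax (insert y I) hind (Finset.subset_insert y I)
    (Finset.insert_subset (hI'X hyI') hIX)
  exact hyI (this ▸ Finset.mem_insert_self y I)

open Classical in
/-- Every independent subset of `X` extends to a maximal one. -/
theorem exists_maximal_indep {M : FinMatroid α} {I X : Finset α} (hI : M.Indep I)
    (hIX : I ⊆ X) : ∃ Jm, M.Indep Jm ∧ I ⊆ Jm ∧ Jm ⊆ X ∧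
      ∀ J, M.Indep J → Jm ⊆ J → J ⊆ X → J = Jm := by
  classical
  let S := X.powerset.filter (fun J => M.Indep J ∧ I ⊆ J)
  have hne : S.Nonempty := ⟨I, Finset.mem_filter.2 ⟨Finset.mem_powerset.2 hIX, hI,
    Finset.Subset.refl I⟩⟩
  obtain ⟨Jm, hJm, hmax⟩ := S.exists_max_image Finset.card hne
  rw [Finset.mem_filter, Finset.mem_powerset] at hJm
  refine ⟨Jm, hJm.2.1, hJm.2.2, hJm.1, ?_⟩
  intro J hJind hJmJ hJX
  have hJS : J ∈ S := Finset.mem_filter.2 ⟨Finset.mem_powerset.2 hJX, hJind,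
    hJm.2.2.trans hJmJ⟩
  exact (Finset.eq_of_subset_of_card_le hJmJ (hmax J hJS)).symm


/-- Circuits: minimal dependent sets. -/
def IsCircuit (M : FinMatroid α) (C : Finset α) : Prop :=
  ¬ M.Indep C ∧ ∀ x ∈ C, M.Indep (C.erase x)

theorem exists_circuit_subset' (M : FinMatroid α) :
    ∀ (n : ℕ) (D : Finset α), D.card ≤ n → ¬ M.Indep D → ∃ C ⊆ D, M.IsCircuit C := by
  intro n
  induction n with
  | zero =>
    intro D hD hdep
    refine ⟨D, Finset.Subset.refl D, hdep, ?_⟩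
    intro x hx
    exact absurd (Finset.card_pos.2 ⟨x, hx⟩) (by omega)
  | succ n ih =>
    intro D hD hdep
    by_cases h : ∀ x ∈ D, M.Indep (D.erase x)
    · exact ⟨D, Finset.Subset.refl D, hdep, h⟩
    · push_neg at h
      obtain ⟨x, hx, hxdep⟩ := h
      have hcard : (D.erase x).card ≤ n := by
        rw [Finset.card_erase_of_mem hx]
        have : 0 < D.card := Finset.card_pos.2 ⟨x, hx⟩
        omega
      obtain ⟨C, hCD, hC⟩ := ih (D.erase x) hcard hxdep
      exact ⟨C, hCD.trans (Finset.erase_subset x D), hC⟩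

theorem exists_circuit_subset (M : FinMatroid α) {D : Finset α} (hdep : ¬ M.Indep D) :
    ∃ C ⊆ D, M.IsCircuit C :=
  M.exists_circuit_subset' D.card D le_rfl hdep

theorem insert_dep {M : FinMatroid α} {B : Finset α} (hB : M.Bases B) {e : α} (heB : e ∉ B) :
    ¬ M.Indep (insert e B) := by
  intro h
  have := indep_card_le h hB
  rw [Finset.card_insert_of_notMem heB] at this
  omega

theorem card_le_of_spanned {M : FinMatroid α} {X I : Finset α} (hX : M.Indep X) (hI : M.Indep I)
    (h : ∀ e ∈ I, e ∉ X → ¬ M.Indep (insert e X)) : I.card ≤ X.card := by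
  have hmax : ∀ J, M.Indep J → X ⊆ J → J ⊆ X ∪ I → J = X := by
    intro J hJ hXJ hJXI
    by_contra hne
    obtain ⟨e, heJ, heX⟩ := Finset.exists_of_ssubset (hXJ.ssubset_of_ne (Ne.symm hne))
    have heI : e ∈ I := by
      rcases Finset.mem_union.1 (hJXI heJ) with h' | h'
      · exact absurd h' heX
      · exact h'
    exact h e heI heX (hJ.subset (Finset.insert_subset heJ hXJ))
  exact card_le_of_maximal_indep hX Finset.subset_union_left hmax hI Finset.subset_union_right

theorem circuit_unique_aux {M : FinMatroid α} {B : Finset α} (hB : M.Bases B) {e : α}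
    (heB : e ∉ B) {C₁ C₂ : Finset α} (h₁ : C₁ ⊆ insert e B) (h₂ : C₂ ⊆ insert e B)
    (hc₁ : M.IsCircuit C₁) (hc₂ : M.IsCircuit C₂) {z : α} (hz₁ : z ∈ C₁) (hz₂ : z ∉ C₂) :
    False := by
  have heC₁ : e ∈ C₁ := by
    by_contra he
    exact hc₁.1 (hB.indep.subset (fun w hw => by
      rcases Finset.mem_insert.1 (h₁ hw) with h | h
      · exact absurd (h ▸ hw) he
      · exact h))
  have heC₂ : e ∈ C₂ := by
    by_contra he
    exact hc₂.1 (hB.indep.subset (fun w hw => by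
      rcases Finset.mem_insert.1 (h₂ hw) with h | h
      · exact absurd (h ▸ hw) he
      · exact h))
  have hzne : z ≠ e := fun h => hz₂ (h ▸ heC₂)
  set X := C₁ ∪ C₂ with hX
  have hDX : X.erase e ⊆ B := by
    intro w hw
    obtain ⟨hw1, hw2⟩ := Finset.mem_erase.1 hw
    rcases Finset.mem_union.1 hw2 with h | h
    · rcases Finset.mem_insert.1 (h₁ h) with h' | h'
      · exact absurd h' hw1
      · exact h'
    · rcases Finset.mem_insert.1 (h₂ h) with h' | h'
      · exact absurd h' hw1
      · exact h'
  have hDind : M.Indep (X.erase e) := hB.indep.subset hDX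
  have hC₁z : M.Indep (C₁.erase z) := hc₁.2 z hz₁
  obtain ⟨Jm, hJmind, hJmsub, hJmX, hJmmax⟩ :=
    exists_maximal_indep hC₁z ((Finset.erase_subset z C₁).trans Finset.subset_union_left)
  have hzJm : z ∉ Jm := by
    intro hzJm
    have : C₁ ⊆ Jm := by
      intro w hw
      by_cases hwz : w = z
      · exact hwz ▸ hzJm
      · exact hJmsub (Finset.mem_erase.2 ⟨hwz, hw⟩)
    exact hc₁.1 (hJmind.subset this)
  obtain ⟨w, hwC₂, hwJm⟩ : ∃ w ∈ C₂, w ∉ Jm := by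
    by_contra hcon
    push_neg at hcon
    exact hc₂.1 (hJmind.subset hcon)
  have hwz : w ≠ z := fun h => hz₂ (h ▸ hwC₂)
  have hJmsub2 : Jm ⊆ (X.erase z).erase w := by
    intro u hu
    exact Finset.mem_erase.2 ⟨fun h => hwJm (h ▸ hu),
      Finset.mem_erase.2 ⟨fun h => hzJm (h ▸ hu), hJmX hu⟩⟩
  have hzX : z ∈ X := Finset.mem_union_left _ hz₁
  have hwX : w ∈ X := Finset.mem_union_right _ hwC₂
  have hcard1 : Jm.card ≤ X.card - 2 := by
    have := Finset.card_le_card hJmsub2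
    rw [Finset.card_erase_of_mem (Finset.mem_erase.2 ⟨hwz, hwX⟩),
      Finset.card_erase_of_mem hzX] at this
    omega
  have hcard2 : (X.erase e).card ≤ Jm.card :=
    card_le_of_maximal_indep hJmind hJmX hJmmax hDind (Finset.erase_subset e X)
  have heX : e ∈ X := Finset.mem_union_left _ heC₁
  rw [Finset.card_erase_of_mem heX] at hcard2
  have : 2 ≤ X.card := Finset.one_lt_card.2 ⟨z, hzX, e, heX, hzne⟩
  omega

theorem circuit_unique {M : FinMatroid α} {B : Finset α} (hB : M.Bases B) {e : α}
    (heB : e ∉ B) {C₁ C₂ : Finset α} (h₁ : C₁ ⊆ insert e B) (h₂ : C₂ ⊆ insert e B)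
    (hc₁ : M.IsCircuit C₁) (hc₂ : M.IsCircuit C₂) : C₁ = C₂ := by
  ext z
  constructor
  · intro hz
    by_contra hz'
    exact circuit_unique_aux hB heB h₁ h₂ hc₁ hc₂ hz hz'
  · intro hz
    by_contra hz'
    exact circuit_unique_aux hB heB h₂ h₁ hc₂ hc₁ hz hz'

/-- The fundamental circuit of `e` with respect to a basis `B`. -/
theorem exists_fundCircuit {M : FinMatroid α} {B : Finset α} (hB : M.Bases B) {e : α}
    (heB : e ∉ B) :
    ∃ C, C ⊆ insert e B ∧ e ∈ C ∧ M.IsCircuit C ∧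
      (∀ x ∈ B, (M.Bases (insert e (B.erase x)) ↔ x ∈ C)) ∧
      (∀ D ⊆ insert e B, ¬ M.Indep D → C ⊆ D) := by
  obtain ⟨C, hCsub, hC⟩ := M.exists_circuit_subset (insert_dep hB heB)
  have heC : e ∈ C := by
    by_contra he
    exact hC.1 (hB.indep.subset (fun w hw => by
      rcases Finset.mem_insert.1 (hCsub hw) with h | h
      · exact absurd (h ▸ hw) he
      · exact h))
  have huniq : ∀ D ⊆ insert e B, ¬ M.Indep D → C ⊆ D := by
    intro D hD hDdep
    obtain ⟨C', hC'D, hC'⟩ := M.exists_circuit_subset hDdep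
    rw [circuit_unique hB heB hCsub (hC'D.trans hD) hC hC']
    exact hC'D
  refine ⟨C, hCsub, heC, hC, ?_, huniq⟩
  intro x hxB
  constructor
  · intro hbasis
    by_contra hxC
    have hsub : C ⊆ insert e (B.erase x) := by
      intro w hw
      rcases Finset.mem_insert.1 (hCsub hw) with h | h
      · exact Finset.mem_insert.2 (Or.inl h)
      · exact Finset.mem_insert_of_mem (Finset.mem_erase.2 ⟨fun hc => hxC (hc ▸ hw), h⟩)
    exact hC.1 (hbasis.indep.subset hsub)
  · intro hxC
    have hxe : x ≠ e := fun h => heB (h ▸ hxB)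
    have hind : M.Indep (insert e (B.erase x)) := by
      by_contra hdep
      have hsub : insert e (B.erase x) ⊆ insert e B :=
        Finset.insert_subset_insert e (Finset.erase_subset x B)
      have := huniq _ hsub hdep
      have hxmem : x ∈ insert e (B.erase x) := this hxC
      rcases Finset.mem_insert.1 hxmem with h | h
      · exact hxe h
      · exact absurd h (Finset.notMem_erase x B)
    refine basis_of_indep_card hind hB ?_
    rw [Finset.card_insert_of_notMem (fun hc => heB (Finset.mem_of_mem_erase hc)),
      Finset.card_erase_of_mem hxB]
    have : 0 < B.card := Finset.card_pos.2 ⟨x, hxB⟩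
    omega

/-- Co-exchange: for `e ∈ B' \ B` there is `x ∈ B \ B'` with `B - x + e` a basis. -/
theorem coexchange {M : FinMatroid α} {B B' : Finset α} (hB : M.Bases B) (hB' : M.Bases B')
    {e : α} (heB' : e ∈ B') (heB : e ∉ B) :
    ∃ x ∈ B, x ∉ B' ∧ M.Bases (insert e (B.erase x)) := by
  obtain ⟨C, hCsub, heC, hC, hiff, -⟩ := exists_fundCircuit hB heB
  have : ¬ C ⊆ B' := fun hsub => hC.1 (hB'.indep.subset hsub)
  obtain ⟨x, hxC, hxB'⟩ := Finset.not_subset.1 this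
  have hxe : x ≠ e := fun h => hxB' (h ▸ heB')
  have hxB : x ∈ B := by
    rcases Finset.mem_insert.1 (hCsub hxC) with h | h
    · exact absurd h hxe
    · exact h
  exact ⟨x, hxB, hxB', (hiff x hxB).2 hxC⟩

/-- Transfer of arcs and non-arcs across one exchange. -/
theorem arc_transfer {M : FinMatroid α} {B : Finset α} (hB : M.Bases B) {x₀ y₀ e : α}
    (hx₀ : x₀ ∈ B) (hy₀ : y₀ ∉ B) (hB1 : M.Bases (insert y₀ (B.erase x₀)))
    (heB : e ∉ B) (hey₀ : e ≠ y₀)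
    (hnochord : ¬ M.Bases (insert e (B.erase x₀))) :
    ∀ x ∈ B, x ≠ x₀ →
      (M.Bases (insert e ((insert y₀ (B.erase x₀)).erase x)) ↔
        M.Bases (insert e (B.erase x))) := by
  set B1 := insert y₀ (B.erase x₀) with hB1def
  have heB1 : e ∉ B1 := by
    simp only [hB1def, Finset.mem_insert, Finset.mem_erase]
    push_neg
    exact ⟨hey₀, fun _ => heB⟩
  obtain ⟨C, hCsub, heC, hC, hiff, -⟩ := exists_fundCircuit hB heB
  obtain ⟨C', hC'sub, heC', hC', hiff', -⟩ := exists_fundCircuit hB1 heB1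
  have hx₀C : x₀ ∉ C := fun h => hnochord ((hiff x₀ hx₀).2 h)
  have hy₀C : y₀ ∉ C := fun h => by
    rcases Finset.mem_insert.1 (hCsub h) with h' | h'
    · exact hey₀ h'.symm
    · exact hy₀ h'
  have hCsub1 : C ⊆ insert e B1 := by
    intro w hw
    rcases Finset.mem_insert.1 (hCsub hw) with h | h
    · exact Finset.mem_insert.2 (Or.inl h)
    · exact Finset.mem_insert_of_mem (Finset.mem_insert_of_mem
        (Finset.mem_erase.2 ⟨fun hc => hx₀C (hc ▸ hw), h⟩))
  have hCC' : C' = C := circuit_unique hB1 heB1 hC'sub hCsub1 hC' hC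
  intro x hxB hxx₀
  have hxB1 : x ∈ B1 := Finset.mem_insert_of_mem (Finset.mem_erase.2 ⟨hxx₀, hxB⟩)
  rw [hiff' x hxB1, hCC', hiff x hxB]

open Classical in
/-- Multi-exchange: a triangular family of exchanges can be applied simultaneously. -/
theorem multi_exchange {M : FinMatroid α} :
    ∀ (r : ℕ) (B : Finset α) (s : Finset ℕ) (xf yf : ℕ → α) (κ : ℕ → ℕ),
      s.card = r → M.Bases B →
      (∀ i ∈ s, xf i ∈ B) → (∀ i ∈ s, yf i ∉ B) →
      (∀ i ∈ s, ∀ j ∈ s, xf i = xf j → i = j) →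
      (∀ i ∈ s, ∀ j ∈ s, yf i = yf j → i = j) →
      (∀ i ∈ s, ∀ j ∈ s, κ i = κ j → i = j) →
      (∀ i ∈ s, M.Bases (insert (yf i) (B.erase (xf i)))) →
      (∀ i ∈ s, ∀ j ∈ s, κ i < κ j → ¬ M.Bases (insert (yf j) (B.erase (xf i)))) →
      M.Bases ((B \ s.image xf) ∪ s.image yf) := by
  intro r
  induction r with
  | zero =>
    intro B s xf yf κ hcard hB _ _ _ _ _ _ _
    rw [Finset.card_eq_zero.1 hcard]
    simpa using hB
  | succ r ih =>
    intro B s xf yf κ hcard hB hx hy hxinj hyinj hκinj harc htri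
    have hne : s.Nonempty := by rw [← Finset.card_pos, hcard]; omega
    obtain ⟨i₀, hi₀, hmin⟩ := s.exists_min_image κ hne
    set B1 := insert (yf i₀) (B.erase (xf i₀)) with hB1def
    have hB1 : M.Bases B1 := harc i₀ hi₀
    set s' := s.erase i₀ with hs'def
    have hs'card : s'.card = r := by
      rw [hs'def, Finset.card_erase_of_mem hi₀, hcard]
      omega
    have hκlt : ∀ j ∈ s', κ i₀ < κ j := by
      intro j hj
      have hjs : j ∈ s := Finset.mem_of_mem_erase hj
      have hne' : j ≠ i₀ := Finset.ne_of_mem_erase hj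
      have := hmin j hjs
      rcases lt_or_eq_of_le this with h | h
      · exact h
      · exact absurd (hκinj i₀ hi₀ j hjs h) (Ne.symm hne')
    have htrans : ∀ j ∈ s', ∀ x ∈ B, x ≠ xf i₀ →
        (M.Bases (insert (yf j) (B1.erase x)) ↔ M.Bases (insert (yf j) (B.erase x))) := by
      intro j hj x hxB hxx₀
      have hjs : j ∈ s := Finset.mem_of_mem_erase hj
      have hne' : j ≠ i₀ := Finset.ne_of_mem_erase hj
      exact arc_transfer hB (hx i₀ hi₀) (hy i₀ hi₀) hB1 (hy j hjs)
        (fun h => hne' (hyinj j hjs i₀ hi₀ h))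
        (htri i₀ hi₀ j hjs (hκlt j hj)) x hxB hxx₀
    have hih := ih B1 s' xf yf κ hs'card hB1
      (fun i hi => by
        have his : i ∈ s := Finset.mem_of_mem_erase hi
        exact Finset.mem_insert_of_mem (Finset.mem_erase.2
          ⟨fun h => (Finset.ne_of_mem_erase hi) (hxinj i his i₀ hi₀ h), hx i his⟩))
      (fun i hi => by
        have his : i ∈ s := Finset.mem_of_mem_erase hi
        simp only [hB1def, Finset.mem_insert, Finset.mem_erase]
        push_neg
        exact ⟨fun h => (Finset.ne_of_mem_erase hi) (hyinj i his i₀ hi₀ h),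
          fun _ => hy i his⟩)
      (fun i hi j hj h => hxinj i (Finset.mem_of_mem_erase hi) j (Finset.mem_of_mem_erase hj) h)
      (fun i hi j hj h => hyinj i (Finset.mem_of_mem_erase hi) j (Finset.mem_of_mem_erase hj) h)
      (fun i hi j hj h => hκinj i (Finset.mem_of_mem_erase hi) j (Finset.mem_of_mem_erase hj) h)
      (fun i hi => by
        have his : i ∈ s := Finset.mem_of_mem_erase hi
        have hne' : i ≠ i₀ := Finset.ne_of_mem_erase hi
        exact (htrans i hi (xf i) (hx i his)
          (fun h => hne' (hxinj i his i₀ hi₀ h))).2 (harc i his))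
      (fun i hi j hj hκ => by
        have his : i ∈ s := Finset.mem_of_mem_erase hi
        have hjs : j ∈ s := Finset.mem_of_mem_erase hj
        have hne' : i ≠ i₀ := Finset.ne_of_mem_erase hi
        intro hcon
        exact htri i his j hjs hκ ((htrans j hj (xf i) (hx i his)
          (fun h => hne' (hxinj i his i₀ hi₀ h))).1 hcon))
    have hset : (B1 \ s'.image xf) ∪ s'.image yf = (B \ s.image xf) ∪ s.image yf := by
      have hy₀xs' : yf i₀ ∉ s'.image xf := by
        intro h
        obtain ⟨j, hj, hjeq⟩ := Finset.mem_image.1 h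
        exact hy i₀ hi₀ (hjeq ▸ hx j (Finset.mem_of_mem_erase hj))
      ext z
      constructor
      · intro hz
        rcases Finset.mem_union.1 hz with hz | hz
        · obtain ⟨hz1, hz2⟩ := Finset.mem_sdiff.1 hz
          rcases Finset.mem_insert.1 hz1 with h | h
          · refine Finset.mem_union_right _ ?_
            rw [h]
            exact Finset.mem_image.2 ⟨i₀, hi₀, rfl⟩
          · obtain ⟨hzx₀, hzB⟩ := Finset.mem_erase.1 h
            refine Finset.mem_union_left _ (Finset.mem_sdiff.2 ⟨hzB, ?_⟩)
            intro hc
            obtain ⟨j, hj, hjeq⟩ := Finset.mem_image.1 hc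
            by_cases hji : j = i₀
            · exact hzx₀ (by rw [← hjeq, hji])
            · exact hz2 (Finset.mem_image.2 ⟨j, Finset.mem_erase.2 ⟨hji, hj⟩, hjeq⟩)
        · obtain ⟨j, hj, hjeq⟩ := Finset.mem_image.1 hz
          exact Finset.mem_union_right _
            (Finset.mem_image.2 ⟨j, Finset.mem_of_mem_erase hj, hjeq⟩)
      · intro hz
        rcases Finset.mem_union.1 hz with hz | hz
        · obtain ⟨hzB, hz2⟩ := Finset.mem_sdiff.1 hz
          have hzx₀ : z ≠ xf i₀ := fun h => hz2 (Finset.mem_image.2 ⟨i₀, hi₀, h.symm⟩)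
          refine Finset.mem_union_left _ (Finset.mem_sdiff.2
            ⟨Finset.mem_insert_of_mem (Finset.mem_erase.2 ⟨hzx₀, hzB⟩), ?_⟩)
          intro hc
          obtain ⟨j, hj, hjeq⟩ := Finset.mem_image.1 hc
          exact hz2 (Finset.mem_image.2 ⟨j, Finset.mem_of_mem_erase hj, hjeq⟩)
        · obtain ⟨j, hj, hjeq⟩ := Finset.mem_image.1 hz
          by_cases hji : j = i₀
          · refine Finset.mem_union_left _ (Finset.mem_sdiff.2 ⟨?_, ?_⟩)
            · rw [← hjeq, hji]
              exact Finset.mem_insert_self _ _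
            · rw [← hjeq, hji]
              exact hy₀xs'
          · exact Finset.mem_union_right _
              (Finset.mem_image.2 ⟨j, Finset.mem_erase.2 ⟨hji, hj⟩, hjeq⟩)
    rw [← hset]
    exact hih

end FinMatroid



/-- A feasible basis sequence: each `B i` is a basis of `M i` and the bases are
pairwise disjoint. -/
def FeasibleSeq (M : Fin k → FinMatroid α) (B : Fin k → Finset α) : Prop :=
  (∀ i, (M i).Bases (B i)) ∧ ∀ i j, i ≠ j → Disjoint (B i) (B j)

/-- Two feasible basis sequences are adjacent if they differ in exactly one
coordinate `i`, by a single exchange `B' i = (B i \ {x}) ∪ {y}` with `x ∈ B i`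
and `y ∈ E i \ B i`. -/
def AdjacentSeq (M : Fin k → FinMatroid α) (B B' : Fin k → Finset α) : Prop :=
  ∃ i : Fin k, (∀ j, j ≠ i → B j = B' j) ∧
    ∃ x ∈ B i, ∃ y ∈ (M i).E, y ∉ B i ∧ B' i = insert y ((B i).erase x)

/-- A reconfiguration sequence of length `ℓ` from `B` to `B'`. -/
def ReconfigSeq (M : Fin k → FinMatroid α) (B B' : Fin k → Finset α) (ℓ : ℕ) : Prop :=
  ∃ seq : ℕ → Fin k → Finset α, seq 0 = B ∧ seq ℓ = B' ∧
    (∀ t ≤ ℓ, FeasibleSeq M (seq t)) ∧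
    ∀ t < ℓ, AdjacentSeq M (seq t) (seq (t + 1))

/-- `B` is reconfigurable to `B'`. -/
def Reconfigurable (M : Fin k → FinMatroid α) (B B' : Fin k → Finset α) : Prop :=
  ∃ ℓ : ℕ, ReconfigSeq M B B' ℓ

/-- The ground set `⋃ i, E i` of the matroid union. -/
def UnionGround (M : Fin k → FinMatroid α) : Finset α :=
  Finset.univ.biUnion fun i => (M i).E

/-- Sets of the form `B 1 ∪ ⋯ ∪ B k` with each `B i` a basis of `M i`. -/
def IsUnionCandidate (M : Fin k → FinMatroid α) (U : Finset α) : Prop :=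
  ∃ b : Fin k → Finset α, (∀ i, (M i).Bases (b i)) ∧ U = Finset.univ.biUnion b

/-- Bases of the matroid union `⋁ i, M i`: maximal sets among unions of bases. -/
def IsUnionBasis (M : Fin k → FinMatroid α) (U : Finset α) : Prop :=
  IsUnionCandidate M U ∧ ∀ V, IsUnionCandidate M V → U ⊆ V → U = V

/-- A coloop of the matroid union: an element of every basis of `⋁ i, M i`. -/
def IsUnionColoop (M : Fin k → FinMatroid α) (x : α) : Prop :=
  ∀ U, IsUnionBasis M U → x ∈ U

/-- The arc set `A i` of the exchangeability graph `D(M i, B i)`: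
`(x, y)` with `x ∈ B i`, `y ∈ E i \ B i` and `(B i \ {x}) ∪ {y}` a basis. -/
def ArcOf (M : Fin k → FinMatroid α) (B : Fin k → Finset α) (i : Fin k) (a : α × α) : Prop :=
  a.1 ∈ B i ∧ a.2 ∈ (M i).E ∧ a.2 ∉ B i ∧ (M i).Bases (insert a.2 ((B i).erase a.1))

/-- Arcs of the exchangeability graph `D(𝕄, 𝔹)`. -/
def ArcD (M : Fin k → FinMatroid α) (B : Fin k → Finset α) (a : α × α) : Prop :=
  ∃ i, ArcOf M B i a

/-- A vertex of `D(𝕄, 𝔹)` lying in `E \ ⋃ i, B i`. -/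
def FreeVertex (M : Fin k → FinMatroid α) (B : Fin k → Finset α) (v : α) : Prop :=
  v ∈ UnionGround M ∧ ∀ i, v ∉ B i

/-- A tadpole-walk `(x 0, …, x m = x 0, …, x n)` in `D(𝕄, 𝔹)`: the first part
(up to `m`) is a (possibly empty) directed cycle, the rest is a directed path,
the vertices are distinct except `x 0 = x m`, and `x n ∈ E \ ⋃ i, B i`. -/
structure TadpoleWalk (M : Fin k → FinMatroid α) (B : Fin k → Finset α) where
  n : ℕ
  m : ℕ
  x : ℕ → α
  m_lt_n : m < n
  closed : x m = x 0
  arc : ∀ t < n, ArcD M B (x t, x (t + 1))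
  distinct : ∀ s t, s < t → t ≤ n → x s = x t → s = 0 ∧ t = m
  last_free : FreeVertex M B (x n)

/-- The order `≺` on the vertices of a tadpole-walk with cycle length `m`,
expressed on positions: the vertex at position `p` precedes the vertex at
position `q` iff `x q` is not the smallest vertex `x 0 = x m` and either `x p`
is the smallest vertex or `p < q`. -/
def TadpolePrec (m p q : ℕ) : Prop :=
  ¬(q = 0 ∨ q = m) ∧ ((p = 0 ∨ p = m) ∨ p < q)

/-- A tadpole-walk is shortcut-free if for any two of its arcs `a, a'` lying in
the same `A i` with `tail a ≺ tail a'`, the pair `(tail a, head a')` is not an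
arc of `A i`. -/
def ShortcutFree {M : Fin k → FinMatroid α} {B : Fin k → Finset α}
    (W : TadpoleWalk M B) : Prop :=
  ∀ i : Fin k, ∀ p < W.n, ∀ q < W.n,
    ArcOf M B i (W.x p, W.x (p + 1)) → ArcOf M B i (W.x q, W.x (q + 1)) →
      TadpolePrec W.m p q → ¬ ArcOf M B i (W.x p, W.x (q + 1))

/-- The set of arcs of a tadpole-walk. -/
def ArcsOfWalk {M : Fin k → FinMatroid α} {B : Fin k → Finset α}
    (W : TadpoleWalk M B) : Set (α × α) :=
  {a | ∃ t, t < W.n ∧ a = (W.x t, W.x (t + 1))}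

/-- The consecutive arcs of a directed path given by its list of vertices. -/
def pathArcs {β : Type u} (P : List β) : List (β × β) := P.zip P.tail

/-- The arcs of a directed cycle given by its list of vertices (including the
closing arc back to the first vertex). -/
def cycleArcs {β : Type u} : List β → List (β × β)
  | [] => []
  | v :: rest => (v :: rest).zip (rest ++ [v])

/-- A valid subgraph of `D(𝕄, 𝔹)`, given by its arc set `S`: the disjoint
union of a (possibly empty) directed path ending at a vertex of
`E \ ⋃ i, B i` and a (possibly empty) directed cycle. -/
def IsValidArcSet (M : Fin k → FinMatroid α) (B : Fin k → Finset α)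
    (S : Finset (α × α)) : Prop :=
  ∃ P C : List α,
    P.Nodup ∧ C.Nodup ∧ (∀ v ∈ P, v ∉ C) ∧
    (∀ a ∈ pathArcs P, ArcD M B a) ∧
    (∀ a ∈ cycleArcs C, ArcD M B a) ∧
    (∀ v, P.getLast? = some v → FreeVertex M B v) ∧
    S = (pathArcs P ++ cycleArcs C).toFinset

open Classical in
/-- `B i △ (S ∩ A i)`: remove from `B i` the tails of the arcs of `S` lying in
`A i` and add their heads. -/
noncomputable def applyArcs (M : Fin k → FinMatroid α) (B : Fin k → Finset α)
    (S : Finset (α × α)) (i : Fin k) : Finset α :=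
  (B i \ (S.filter fun a => ArcOf M B i a).image Prod.fst) ∪
    (S.filter fun a => ArcOf M B i a).image Prod.snd

/-- `M` is the partition matroid with blocks `P j` and ranks `r j`. -/
def IsPartitionStructure (M : FinMatroid α) {t : ℕ} (P : Fin t → Finset α)
    (r : Fin t → ℕ) : Prop :=
  (∀ j j', j ≠ j' → Disjoint (P j) (P j')) ∧
  Finset.univ.biUnion P = M.E ∧
  (∀ j, r j ≤ (P j).card) ∧
  ∀ B : Finset α, M.Bases B ↔ B ⊆ M.E ∧ ∀ j, (B ∩ P j).card = r j

section UnionLemmas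

variable {α : Type u} [DecidableEq α] {k : ℕ}

open Finset

theorem feasible_union_card {M : Fin k → FinMatroid α} {B : Fin k → Finset α}
    (hB : FeasibleSeq M B) :
    (Finset.univ.biUnion B).card = ∑ i, (B i).card :=
  Finset.card_biUnion (fun i _ j _ hij => hB.2 i j hij)

theorem candidate_card_le {M : Fin k → FinMatroid α} {B : Fin k → Finset α}
    (hB : FeasibleSeq M B) {V : Finset α} (hV : IsUnionCandidate M V) :
    V.card ≤ (Finset.univ.biUnion B).card := by
  obtain ⟨b, hb, rfl⟩ := hV
  calc (Finset.univ.biUnion b).card ≤ ∑ i, (b i).card := Finset.card_biUnion_le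
    _ = ∑ i, (B i).card := by
        exact Finset.sum_congr rfl (fun i _ => (M i).card_eq_of_bases (hb i) (hB.1 i))
    _ = (Finset.univ.biUnion B).card := (feasible_union_card hB).symm

theorem feasible_isUnionBasis {M : Fin k → FinMatroid α} {B : Fin k → Finset α}
    (hB : FeasibleSeq M B) : IsUnionBasis M (Finset.univ.biUnion B) := by
  refine ⟨⟨B, hB.1, rfl⟩, ?_⟩
  intro V hV hsub
  exact Finset.eq_of_subset_of_card_le hsub (candidate_card_le hB hV)

theorem coloop_mem_feasible {M : Fin k → FinMatroid α} {B : Fin k → Finset α}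
    (hB : FeasibleSeq M B) {x : α} (hx : IsUnionColoop M x) :
    x ∈ Finset.univ.biUnion B :=
  hx _ (feasible_isUnionBasis hB)

open Classical in
/-- Any family of bases is dominated by a pairwise disjoint family. -/
theorem exists_disjoint_witnesses {M : Fin k → FinMatroid α} {B : Fin k → Finset α}
    (hB : FeasibleSeq M B) :
    ∀ (n : ℕ) (D : Fin k → Finset α), (∑ i, ((D i) \ (B i)).card) ≤ n →
      (∀ i, (M i).Bases (D i)) →
      ∃ D' : Fin k → Finset α, (∀ i, (M i).Bases (D' i)) ∧
        (∀ i j, i ≠ j → Disjoint (D' i) (D' j)) ∧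
        Finset.univ.biUnion D ⊆ Finset.univ.biUnion D' := by
  intro n
  induction n with
  | zero =>
    intro D hsum hD
    -- all D i ⊆ B i, hence D i = B i, disjoint
    have hsub : ∀ i, D i = B i := by
      intro i
      have h0 : ((D i) \ (B i)).card = 0 := by
        have := Finset.sum_eq_zero_iff.1 (Nat.le_zero.1 hsum) i (Finset.mem_univ i)
        exact this
      have hsub : D i ⊆ B i := by
        intro x hx
        by_contra hx'
        have : x ∈ D i \ B i := Finset.mem_sdiff.2 ⟨hx, hx'⟩
        rw [Finset.card_eq_zero.1 h0] at this
        exact absurd this (Finset.notMem_empty x)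
      exact Finset.eq_of_subset_of_card_le hsub
        ((M i).card_eq_of_bases (hB.1 i) (hD i)).le
    refine ⟨D, hD, fun i j hij => ?_, Finset.Subset.refl _⟩
    rw [hsub i, hsub j]
    exact hB.2 i j hij
  | succ n ih =>
    intro D hsum hD
    by_cases hdisj : ∀ i j, i ≠ j → Disjoint (D i) (D j)
    · exact ⟨D, hD, hdisj, Finset.Subset.refl _⟩
    · push_neg at hdisj
      obtain ⟨i, j, hij, hnd⟩ := hdisj
      obtain ⟨x, hxi, hxj⟩ := Finset.not_disjoint_iff.1 hnd
      -- pick a coordinate c with x ∈ D c and x ∉ B c, and c' ≠ c with x ∈ D c'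
      obtain ⟨c, c', hcc', hxc, hxc', hxBc⟩ :
          ∃ c c', c ≠ c' ∧ x ∈ D c ∧ x ∈ D c' ∧ x ∉ B c := by
        by_cases hxB : x ∈ B i
        · exact ⟨j, i, hij.symm, hxj, hxi, fun hc =>
            (Finset.disjoint_left.1 (hB.2 i j hij) hxB) hc⟩
        · exact ⟨i, j, hij, hxi, hxj, hxB⟩
      obtain ⟨w, hwB, hwD, hDc'basis⟩ :=
        (M c).basis_exchange (D c) (B c) (hD c) (hB.1 c) x hxc hxBc
      set Dc2 := insert w ((D c).erase x) with hDc2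
      set D2 := Function.update D c Dc2 with hD2
      have hD2bases : ∀ i, (M i).Bases (D2 i) := by
        intro i
        by_cases hic : i = c
        · rw [hic, hD2, Function.update_self]
          exact hDc'basis
        · rw [hD2, Function.update_of_ne hic]
          exact hD i
      have hmeasure : (∑ i, ((D2 i) \ (B i)).card) ≤ n := by
        have hkey : (Dc2 \ B c) = (D c \ B c).erase x := by
          ext z
          simp only [hDc2, Finset.mem_sdiff, Finset.mem_insert, Finset.mem_erase]
          constructor
          · rintro ⟨hz1 | ⟨hz2, hz3⟩, hz4⟩
            · exact absurd (hz1 ▸ hwB) hz4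
            · exact ⟨hz2, hz3, hz4⟩
          · rintro ⟨hz1, hz2, hz3⟩
            exact ⟨Or.inr ⟨hz1, hz2⟩, hz3⟩
        have hcard : (Dc2 \ B c).card = (D c \ B c).card - 1 := by
          rw [hkey, Finset.card_erase_of_mem (Finset.mem_sdiff.2 ⟨hxc, hxBc⟩)]
        have hpos : 1 ≤ (D c \ B c).card :=
          Finset.card_pos.2 ⟨x, Finset.mem_sdiff.2 ⟨hxc, hxBc⟩⟩
        have hsplit : ∀ (f : Fin k → ℕ), (∑ i, f i) = f c + ∑ i ∈ univ.erase c, f i := by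
          intro f
          rw [← Finset.add_sum_erase _ f (Finset.mem_univ c)]
        have heq : ∑ i ∈ univ.erase c, ((D2 i) \ (B i)).card
            = ∑ i ∈ univ.erase c, ((D i) \ (B i)).card := by
          refine Finset.sum_congr rfl (fun i hi => ?_)
          rw [hD2, Function.update_of_ne (Finset.ne_of_mem_erase hi)]
        have h2 : (D2 c \ B c).card = (D c \ B c).card - 1 := by
          rw [hD2, Function.update_self]
          exact hcard
        rw [hsplit (fun i => ((D2 i) \ (B i)).card), heq, h2] at *
        rw [hsplit (fun i => ((D i) \ (B i)).card)] at hsum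
        omega
      obtain ⟨D', hD', hdisj', hsub'⟩ := ih D2 hmeasure hD2bases
      refine ⟨D', hD', hdisj', ?_⟩
      intro z hz
      obtain ⟨a, -, hza⟩ := Finset.mem_biUnion.1 hz
      by_cases hzc : a = c
      · subst hzc
        by_cases hzx : z = x
        · refine hsub' (Finset.mem_biUnion.2 ⟨c', Finset.mem_univ c', ?_⟩)
          rw [hD2, Function.update_of_ne (Ne.symm hcc')]
          exact hzx ▸ hxc'
        · refine hsub' (Finset.mem_biUnion.2 ⟨a, Finset.mem_univ a, ?_⟩)
          rw [hD2, Function.update_self]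
          exact Finset.mem_insert_of_mem (Finset.mem_erase.2 ⟨hzx, hza⟩)
      · refine hsub' (Finset.mem_biUnion.2 ⟨a, Finset.mem_univ a, ?_⟩)
        rw [hD2, Function.update_of_ne hzc]
        exact hza

theorem unionBasis_disjoint_witnesses {M : Fin k → FinMatroid α} {B : Fin k → Finset α}
    (hB : FeasibleSeq M B) {V : Finset α} (hV : IsUnionBasis M V) :
    ∃ D : Fin k → Finset α, (∀ i, (M i).Bases (D i)) ∧
      (∀ i j, i ≠ j → Disjoint (D i) (D j)) ∧ V = Finset.univ.biUnion D := by
  obtain ⟨⟨b, hb, hVeq⟩, hmax⟩ := hV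
  obtain ⟨D, hD, hdisj, hsub⟩ := exists_disjoint_witnesses hB _ b le_rfl hb
  refine ⟨D, hD, hdisj, hmax _ ⟨D, hD, rfl⟩ (hVeq ▸ hsub)⟩

/-- A single feasible move preserves the coloop content of each coordinate. -/
theorem coloop_inter_eq_of_adjacent {M : Fin k → FinMatroid α} {B B₂ : Fin k → Finset α}
    (hB : FeasibleSeq M B) (hB₂ : FeasibleSeq M B₂) (hadj : AdjacentSeq M B B₂) :
    ∀ c, {x | IsUnionColoop M x} ∩ ((B c : Finset α) : Set α) =
      {x | IsUnionColoop M x} ∩ ((B₂ c : Finset α) : Set α) := by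
  obtain ⟨i, hother, x, hxB, y, hyE, hyB, heq⟩ := hadj
  have hxy : x ≠ y := fun h => hyB (h ▸ hxB)
  have hxK : ¬ IsUnionColoop M x := by
    intro hK
    have hx2 : x ∈ Finset.univ.biUnion B₂ := coloop_mem_feasible hB₂ hK
    obtain ⟨j, -, hxj⟩ := Finset.mem_biUnion.1 hx2
    by_cases hji : j = i
    · subst hji
      rw [heq] at hxj
      rcases Finset.mem_insert.1 hxj with h | h
      · exact hxy h
      · exact absurd h (Finset.notMem_erase x _)
    · rw [← hother j hji] at hxj
      exact Finset.disjoint_left.1 (hB.2 j i hji) hxj hxB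
  have hyK : ¬ IsUnionColoop M y := by
    intro hK
    have hy2 : y ∈ Finset.univ.biUnion B := coloop_mem_feasible hB hK
    obtain ⟨j, -, hyj⟩ := Finset.mem_biUnion.1 hy2
    by_cases hji : j = i
    · exact hyB (hji ▸ hyj)
    · have hyi2 : y ∈ B₂ i := heq ▸ Finset.mem_insert_self y _
      have hyj2 : y ∈ B₂ j := (hother j hji) ▸ hyj
      exact Finset.disjoint_left.1 (hB₂.2 j i hji) hyj2 hyi2
  intro c
  by_cases hci : c = i
  · subst hci
    ext z
    simp only [Set.mem_inter_iff, Set.mem_setOf_eq, Finset.mem_coe]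
    constructor
    · rintro ⟨hzK, hzB⟩
      have hzx : z ≠ x := fun h => hxK (h ▸ hzK)
      refine ⟨hzK, ?_⟩
      rw [heq]
      exact Finset.mem_insert_of_mem (Finset.mem_erase.2 ⟨hzx, hzB⟩)
    · rintro ⟨hzK, hzB⟩
      rw [heq] at hzB
      rcases Finset.mem_insert.1 hzB with h | h
      · exact absurd (h ▸ hzK) hyK
      · exact ⟨hzK, Finset.mem_of_mem_erase h⟩
  · rw [hother c hci]

end UnionLemmas

section ReconfigPlumbing

variable {α : Type u} [DecidableEq α] {k : ℕ}

theorem reconfigurable_refl {M : Fin k → FinMatroid α} {B : Fin k → Finset α}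
    (hB : FeasibleSeq M B) : Reconfigurable M B B :=
  ⟨0, fun _ => B, rfl, rfl, fun _ _ => hB, fun t ht => absurd ht (Nat.not_lt_zero t)⟩

theorem reconfigurable_trans {M : Fin k → FinMatroid α} {A B C : Fin k → Finset α} :
    Reconfigurable M A B → Reconfigurable M B C → Reconfigurable M A C := by
  rintro ⟨ℓ₁, s₁, h10, h11, h1f, h1a⟩ ⟨ℓ₂, s₂, h20, h21, h2f, h2a⟩
  classical
  refine ⟨ℓ₁ + ℓ₂, fun t => if t ≤ ℓ₁ then s₁ t else s₂ (t - ℓ₁), ?_, ?_, ?_, ?_⟩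
  · simpa using h10
  · dsimp only
    by_cases h : ℓ₂ = 0
    · subst h
      simp only [Nat.add_zero, if_pos (le_refl ℓ₁)]
      rw [h11, ← h20, h21]
    · rw [if_neg (by omega), Nat.add_sub_cancel_left, h21]
  · intro t ht
    dsimp only
    by_cases h : t ≤ ℓ₁
    · rw [if_pos h]; exact h1f t h
    · rw [if_neg h]; exact h2f (t - ℓ₁) (by omega)
  · intro t ht
    dsimp only
    by_cases h : t + 1 ≤ ℓ₁
    · rw [if_pos (by omega : t ≤ ℓ₁), if_pos h]
      exact h1a t (by omega)
    · by_cases h' : t ≤ ℓ₁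
      · have htl : t = ℓ₁ := by omega
        rw [if_pos h', if_neg h, htl, h11, ← h20]
        have h1 : ℓ₁ + 1 - ℓ₁ = 1 := by omega
        rw [h1]
        exact h2a 0 (by subst htl; omega)
      · rw [if_neg h', if_neg h]
        have h1 : t + 1 - ℓ₁ = (t - ℓ₁) + 1 := by omega
        rw [h1]
        exact h2a (t - ℓ₁) (by omega)

theorem reconfigurable_single {M : Fin k → FinMatroid α} {B B₂ : Fin k → Finset α}
    (hB : FeasibleSeq M B) (hB₂ : FeasibleSeq M B₂) (h : AdjacentSeq M B B₂) :
    Reconfigurable M B B₂ := by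
  classical
  refine ⟨1, fun t => if t = 0 then B else B₂, by simp, by simp, ?_, ?_⟩
  · intro t ht
    dsimp only
    by_cases h0 : t = 0
    · rw [if_pos h0]; exact hB
    · rw [if_neg h0]; exact hB₂
  · intro t ht
    dsimp only
    have h0 : t = 0 := by omega
    subst h0
    simpa using h

theorem reconfigurable_chain {M : Fin k → FinMatroid α} (f : ℕ → Fin k → Finset α) (N : ℕ)
    (hf : ∀ s ≤ N, FeasibleSeq M (f s)) (ha : ∀ s < N, AdjacentSeq M (f s) (f (s + 1))) :
    Reconfigurable M (f 0) (f N) := ⟨N, f, rfl, rfl, hf, ha⟩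

theorem reflTransGen_path {β : Type u} {r : β → β → Prop} {a b : β}
    (h : Relation.ReflTransGen r a b) :
    ∃ (n : ℕ) (p : ℕ → β), p 0 = a ∧ p n = b ∧ ∀ t < n, r (p t) (p (t + 1)) := by
  classical
  induction h with
  | refl => exact ⟨0, fun _ => a, rfl, rfl, fun t ht => absurd ht (Nat.not_lt_zero t)⟩
  | @tail b' c hab hbc ih =>
    obtain ⟨n, p, h0, hn, harc⟩ := ih
    refine ⟨n + 1, fun t => if t ≤ n then p t else c, by simpa using h0, ?_, ?_⟩
    · dsimp only
      rw [if_neg (by omega)]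
    · intro t ht
      dsimp only
      by_cases h1 : t + 1 ≤ n
      · rw [if_pos (by omega : t ≤ n), if_pos h1]
        exact harc t (by omega)
      · have htn : t = n := by omega
        rw [if_pos (by omega : t ≤ n), if_neg h1, htn, hn]
        exact hbc

end ReconfigPlumbing

section EscapePath

variable {α : Type u} [DecidableEq α] {k : ℕ}

open Classical in
/-- If `y` lies in some `B i` and is not a coloop of the union, then there is a
directed walk in the exchangeability graph from `y` to a free vertex. -/
theorem exists_escape_walk {M : Fin k → FinMatroid α} {B : Fin k → Finset α}
    (hB : FeasibleSeq M B) {y : α} {i₀ : Fin k} (hy : y ∈ B i₀)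
    (hync : ¬ IsUnionColoop M y) :
    ∃ (n : ℕ) (p : ℕ → α), p 0 = y ∧ (∀ t < n, ArcD M B (p t, p (t + 1))) ∧
      FreeVertex M B (p n) := by
  classical
  -- a union basis avoiding y, with disjoint witnesses
  obtain ⟨V, hV, hyV⟩ : ∃ V, IsUnionBasis M V ∧ y ∉ V := by
    by_contra hcon
    push_neg at hcon
    exact hync (fun U hU => hcon U hU)
  obtain ⟨D, hD, hDdisj, hVeq⟩ := unionBasis_disjoint_witnesses hB hV
  by_contra hcon
  push_neg at hcon
  set step : α → α → Prop := fun u v => ArcD M B (u, v) with hstep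
  have hnofree : ∀ f, Relation.ReflTransGen step y f → ¬ FreeVertex M B f := by
    intro f hreach hfree
    obtain ⟨n, p, h0, hn, harc⟩ := reflTransGen_path hreach
    exact (hcon n p h0 (fun t ht => harc t ht)) (hn ▸ hfree)
  set R : Finset α := (UnionGround M).filter (fun v => Relation.ReflTransGen step y v)
    with hR
  have hyR : y ∈ R := by
    refine Finset.mem_filter.2 ⟨?_, Relation.ReflTransGen.refl⟩
    exact Finset.mem_biUnion.2 ⟨i₀, Finset.mem_univ i₀,
      (M i₀).mem_ground_of_mem_basis (hB.1 i₀) hy⟩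
  have hclosed : ∀ u ∈ R, ∀ v, ArcD M B (u, v) → v ∈ R := by
    intro u hu v harc
    obtain ⟨c, hc⟩ := harc
    refine Finset.mem_filter.2 ⟨Finset.mem_biUnion.2 ⟨c, Finset.mem_univ c, hc.2.1⟩, ?_⟩
    exact Relation.ReflTransGen.tail (Finset.mem_filter.1 hu).2 ⟨c, hc⟩
  have hRJ : ∀ v ∈ R, ∃ i, v ∈ B i := by
    intro v hv
    obtain ⟨hvg, hvreach⟩ := Finset.mem_filter.1 hv
    by_contra hvB
    push_neg at hvB
    exact hnofree v hvreach ⟨hvg, hvB⟩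
  -- counting: for each c, (D c \ R).card ≤ (B c \ R).card
  have hcount : ∀ c, ((D c) \ R).card ≤ ((B c) \ R).card := by
    intro c
    have hXind : (M c).Indep ((B c) \ R) := (hB.1 c).indep.subset (Finset.sdiff_subset)
    have hIind : (M c).Indep ((D c) \ R) := (hD c).indep.subset (Finset.sdiff_subset)
    refine FinMatroid.card_le_of_spanned hXind hIind ?_
    intro e heI heX
    obtain ⟨heD, heR⟩ := Finset.mem_sdiff.1 heI
    have heB : e ∉ B c := by
      intro h
      exact heX (Finset.mem_sdiff.2 ⟨h, heR⟩)
    obtain ⟨C, hCsub, heC, hCc, hiff, -⟩ := FinMatroid.exists_fundCircuit (hB.1 c) heB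
    intro hind
    refine hCc.1 (hind.subset ?_)
    intro z hz
    rcases Finset.mem_insert.1 (hCsub hz) with h | h
    · exact Finset.mem_insert.2 (Or.inl h)
    · refine Finset.mem_insert_of_mem (Finset.mem_sdiff.2 ⟨h, ?_⟩)
      intro hzR
      refine heR (hclosed z hzR e ⟨c, h, ?_, heB, (hiff z h).2 hz⟩)
      exact (M c).mem_ground_of_mem_basis (hD c) heD
  -- sums
  have hBsum : ∑ c, ((B c) ∩ R).card = R.card := by
    have hsub : R ⊆ Finset.univ.biUnion B := by
      intro v hv
      obtain ⟨i, hi⟩ := hRJ v hv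
      exact Finset.mem_biUnion.2 ⟨i, Finset.mem_univ i, hi⟩
    have : R = Finset.univ.biUnion (fun c => (B c) ∩ R) := by
      ext z
      simp only [Finset.mem_biUnion, Finset.mem_inter, Finset.mem_univ, true_and]
      constructor
      · intro hz
        obtain ⟨i, hi⟩ := Finset.mem_biUnion.1 (hsub hz)
        exact ⟨i, hi.2, hz⟩
      · rintro ⟨i, -, hz⟩
        exact hz
    have h2 : (Finset.univ.biUnion (fun c => (B c) ∩ R)).card = ∑ c, ((B c) ∩ R).card := by
      refine Finset.card_biUnion ?_
      intro i _ j _ hij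
      exact Finset.disjoint_left.2 (fun a ha hb =>
        Finset.disjoint_left.1 (hB.2 i j hij) (Finset.mem_inter.1 ha).1
          (Finset.mem_inter.1 hb).1)
    rw [← this] at h2
    exact h2.symm
  have hDsum : ∑ c, ((D c) ∩ R).card = (V ∩ R).card := by
    have : V ∩ R = Finset.univ.biUnion (fun c => (D c) ∩ R) := by
      rw [hVeq]
      ext z
      simp only [Finset.mem_biUnion, Finset.mem_inter, Finset.mem_univ, true_and]
      tauto
    have h2 : (Finset.univ.biUnion (fun c => (D c) ∩ R)).card = ∑ c, ((D c) ∩ R).card := by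
      refine Finset.card_biUnion ?_
      intro i _ j _ hij
      exact Finset.disjoint_left.2 (fun a ha hb =>
        Finset.disjoint_left.1 (hDdisj i j hij) (Finset.mem_inter.1 ha).1
          (Finset.mem_inter.1 hb).1)
    rw [← this] at h2
    exact h2.symm
  have hVR : (V ∩ R).card < R.card := by
    have hsub : V ∩ R ⊆ R.erase y := by
      intro z hz
      obtain ⟨hzV, hzR⟩ := Finset.mem_inter.1 hz
      exact Finset.mem_erase.2 ⟨fun h => hyV (h ▸ hzV), hzR⟩
    have := Finset.card_le_card hsub
    rw [Finset.card_erase_of_mem hyR] at this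
    have hpos : 0 < R.card := Finset.card_pos.2 ⟨y, hyR⟩
    omega
  have hcards : ∀ c, ((B c) ∩ R).card ≤ ((D c) ∩ R).card := by
    intro c
    have h1 := Finset.card_inter_add_card_sdiff (B c) R
    have h2 := Finset.card_inter_add_card_sdiff (D c) R
    have h3 : (B c).card = (D c).card := (M c).card_eq_of_bases (hB.1 c) (hD c)
    have := hcount c
    omega
  have : R.card ≤ (V ∩ R).card := by
    rw [← hBsum, ← hDsum]
    exact Finset.sum_le_sum (fun c _ => hcards c)
  omega

end EscapePath

section Tadpole

variable {α : Type u} [DecidableEq α] {k : ℕ}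

/-- An arc of the exchange graph that is aligned towards `B'`. -/
def AlignedArc (M : Fin k → FinMatroid α) (B B' : Fin k → Finset α) (u v : α) : Prop :=
  ∃ c, u ∈ B c ∧ v ∈ B' c ∧ v ∉ B c ∧ (M c).Bases (insert v ((B c).erase u))

theorem arcD_data {M : Fin k → FinMatroid α} {B : Fin k → Finset α} (hB : FeasibleSeq M B)
    {u v : α} (h : ArcD M B (u, v)) {c : Fin k} (hu : u ∈ B c) :
    v ∈ (M c).E ∧ v ∉ B c ∧ (M c).Bases (insert v ((B c).erase u)) := by
  obtain ⟨c', h1, h2, h3, h4⟩ := h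
  have hcc : c' = c := by
    by_contra hne
    exact Finset.disjoint_left.1 (hB.2 c' c hne) h1 hu
  subst hcc
  exact ⟨h2, h3, h4⟩

theorem alignedArc_data {M : Fin k → FinMatroid α} {B B' : Fin k → Finset α}
    (hB : FeasibleSeq M B) {u v : α} (h : AlignedArc M B B' u v) {c : Fin k} (hu : u ∈ B c) :
    v ∈ B' c ∧ v ∉ B c ∧ (M c).Bases (insert v ((B c).erase u)) := by
  obtain ⟨c', h1, h2, h3, h4⟩ := h
  have hcc : c' = c := by
    by_contra hne
    exact Finset.disjoint_left.1 (hB.2 c' c hne) h1 hu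
  subst hcc
  exact ⟨h2, h3, h4⟩

theorem alignedArc_arcD {M : Fin k → FinMatroid α} {B B' : Fin k → Finset α}
    (hB' : FeasibleSeq M B') {u v : α} (h : AlignedArc M B B' u v) : ArcD M B (u, v) := by
  obtain ⟨c, h1, h2, h3, h4⟩ := h
  exact ⟨c, h1, (M c).mem_ground_of_mem_basis (hB'.1 c) h2, h3, h4⟩

/-- The data of a shortcut-free tadpole walk. -/
structure TData (M : Fin k → FinMatroid α) (B B' : Fin k → Finset α) : Type u where
  m : ℕ
  n : ℕ
  w : ℕ → α
  hm : 2 ≤ m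
  hmn : m < n
  closed : w m = w 0
  aligned : ∀ t, t < m → AlignedArc M B B' (w t) (w (t + 1))
  arcs : ∀ t, t < n → ArcD M B (w t, w (t + 1))
  distinct : ∀ s t, s < t → t ≤ n → w s = w t → s = 0 ∧ t = m
  free : FreeVertex M B (w n)
  nochord : ∀ p q, p < n → q < n → ∀ c, w p ∈ B c → w q ∈ B c →
    ¬(q = 0 ∨ q = m) → (p = 0 ∨ p = m ∨ p < q) →
    ¬ (M c).Bases (insert (w (q + 1)) ((B c).erase (w p)))

open Classical in
theorem exists_tdata {M : Fin k → FinMatroid α} {B B' : Fin k → Finset α}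
    (hB : FeasibleSeq M B) (hB' : FeasibleSeq M B')
    (hJ : Finset.univ.biUnion B = Finset.univ.biUnion B')
    (hK : ∀ c, {x | IsUnionColoop M x} ∩ ((B c : Finset α) : Set α) =
      {x | IsUnionColoop M x} ∩ ((B' c : Finset α) : Set α))
    {y : α} {i : Fin k} (hyB' : y ∈ B' i) (hyB : y ∉ B i) :
    Nonempty (TData M B B') := by
  classical
  -- misplaced elements
  set Mis : α → Prop := fun z => ∃ c, z ∈ B' c ∧ z ∉ B c with hMis
  have hyMis : Mis y := ⟨i, hyB', hyB⟩
  have hback : ∀ z : {z : α // Mis z}, ∃ u : {z : α // Mis z},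
      AlignedArc M B B' u.1 z.1 := by
    rintro ⟨z, c, hz1, hz2⟩
    obtain ⟨u, huB, huB', hbasis⟩ := FinMatroid.coexchange (hB.1 c) (hB'.1 c) hz1 hz2
    have huJ : u ∈ Finset.univ.biUnion B' := by
      rw [← hJ]
      exact Finset.mem_biUnion.2 ⟨c, Finset.mem_univ c, huB⟩
    obtain ⟨c', -, huc'⟩ := Finset.mem_biUnion.1 huJ
    have hcc' : c' ≠ c := fun h => huB' (h ▸ huc')
    have huBc' : u ∉ B c' := fun h => Finset.disjoint_left.1 (hB.2 c' c hcc') h huB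
    exact ⟨⟨u, c', huc', huBc'⟩, ⟨c, huB, hz1, hz2, hbasis⟩⟩
  choose g hg using hback
  set v : ℕ → {z : α // Mis z} := fun t => g^[t] ⟨y, hyMis⟩ with hv
  have hvarc : ∀ t, AlignedArc M B B' (v (t + 1)).1 (v t).1 := by
    intro t
    have : v (t + 1) = g (v t) := Function.iterate_succ_apply' g t _
    rw [this]
    exact hg (v t)
  -- pigeonhole to get a closed aligned walk
  have hrep : ∃ s t, s < t ∧ (v s).1 = (v t).1 := by
    set N := (Finset.univ.biUnion B').card
    have hmaps : ∀ t ∈ Finset.range (N + 1), (v t).1 ∈ Finset.univ.biUnion B' := by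
      intro t _
      obtain ⟨c, h1, -⟩ := (v t).2
      exact Finset.mem_biUnion.2 ⟨c, Finset.mem_univ c, h1⟩
    have hcard : (Finset.univ.biUnion B').card < (Finset.range (N + 1)).card := by
      rw [Finset.card_range]; omega
    obtain ⟨s, -, t, -, hst, heq⟩ :=
      Finset.exists_ne_map_eq_of_card_lt_of_maps_to hcard hmaps
    rcases Nat.lt_or_ge s t with h | h
    · exact ⟨s, t, h, heq⟩
    · exact ⟨t, s, by omega, heq.symm⟩
  obtain ⟨s₁, t₁, hst₁, heq₁⟩ := hrep
  -- minimal closed aligned walk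
  set P : ℕ → Prop := fun L => 1 ≤ L ∧ ∃ z : ℕ → α, z L = z 0 ∧
    ∀ j < L, AlignedArc M B B' (z j) (z (j + 1)) with hP
  have hPex : ∃ L, P L := by
    refine ⟨t₁ - s₁, by omega, fun j => (v (t₁ - j)).1, ?_, ?_⟩
    · show (v (t₁ - (t₁ - s₁))).1 = (v (t₁ - 0)).1
      rw [show t₁ - (t₁ - s₁) = s₁ by omega, show t₁ - 0 = t₁ by omega]
      exact heq₁
    · intro j hj
      show AlignedArc M B B' (v (t₁ - j)).1 (v (t₁ - (j + 1))).1
      have h2 : t₁ - (j + 1) = t₁ - j - 1 := by omega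
      have := hvarc (t₁ - j - 1)
      rw [show t₁ - j - 1 + 1 = t₁ - j by omega] at this
      rw [h2]
      exact this
  set m₀ := Nat.find hPex with hm₀
  obtain ⟨hm₀1, x, hxc, hxarc⟩ := Nat.find_spec hPex
  rw [← hm₀] at hm₀1 hxc hxarc
  have hcycmin : ∀ L (z : ℕ → α), 1 ≤ L → z L = z 0 →
      (∀ j < L, AlignedArc M B B' (z j) (z (j + 1))) → m₀ ≤ L := by
    intro L z h1 h2 h3
    exact Nat.find_le ⟨h1, z, h2, h3⟩
  have hm₀2 : 2 ≤ m₀ := by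
    rcases Nat.lt_or_ge m₀ 2 with h | h
    · exfalso
      have hm1 : m₀ = 1 := by omega
      have := hxarc 0 (by omega)
      obtain ⟨c, hc1, -, hc3, -⟩ := this
      rw [hm1] at hxc
      exact hc3 (hxc ▸ hc1)
    · exact h
  have hdist₀ : ∀ s t, s < t → t ≤ m₀ → x s = x t → s = 0 ∧ t = m₀ := by
    intro s t hst htm hxe
    by_contra hcon
    have hlt : t - s < m₀ := by
      rcases Nat.lt_or_ge (t - s) m₀ with h | h
      · exact h
      · exfalso; exact hcon (by omega)
    have := hcycmin (t - s) (fun j => x (s + j)) (by omega)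
      (by
        show x (s + (t - s)) = x (s + 0)
        rw [show s + (t - s) = t by omega, Nat.add_zero]
        exact hxe.symm)
      (by
        intro j hj
        show AlignedArc M B B' (x (s + j)) (x (s + (j + 1)))
        rw [show s + (j + 1) = (s + j) + 1 by omega]
        exact hxarc (s + j) (by omega))
    omega
  -- every cycle vertex is in some B c and not in the corresponding B' c
  have htail : ∀ r, r < m₀ → ∃ c, x r ∈ B c := by
    intro r hr
    obtain ⟨c, hc1, -⟩ := hxarc r hr
    exact ⟨c, hc1⟩
  have hmisv : ∀ r (c : Fin k), r < m₀ → x r ∈ B c → x r ∉ B' c := by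
    intro r c hr hrB
    -- the head form: x r is the head of the previous arc
    have hprev : ∃ c', x r ∈ B' c' ∧ x r ∉ B c' := by
      rcases Nat.eq_zero_or_pos r with h0 | hpos
      · obtain ⟨c', h1, h2, h3, -⟩ := hxarc (m₀ - 1) (by omega)
        rw [show m₀ - 1 + 1 = m₀ by omega, hxc, ← h0] at h2 h3
        exact ⟨c', h2, h3⟩
      · obtain ⟨c', h1, h2, h3, -⟩ := hxarc (r - 1) (by omega)
        rw [show r - 1 + 1 = r by omega] at h2 h3
        exact ⟨c', h2, h3⟩
    obtain ⟨c', h1, h2⟩ := hprev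
    have : c' ≠ c := fun h => h2 (h ▸ hrB)
    intro hcon
    exact Finset.disjoint_left.1 (hB'.2 c' c this) h1 hcon
  have hnc : ∀ r (c : Fin k), r < m₀ → x r ∈ B c → ¬ IsUnionColoop M (x r) := by
    intro r c hr hrB hcol
    have h1 : x r ∈ {z | IsUnionColoop M z} ∩ ((B c : Finset α) : Set α) := ⟨hcol, hrB⟩
    rw [hK c] at h1
    exact hmisv r c hr hrB h1.2
  -- minimal escape path from the cycle
  set Q : ℕ → Prop := fun L => ∃ z : ℕ → α, (∃ r, r < m₀ ∧ z 0 = x r) ∧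
    (∀ j < L, ArcD M B (z j, z (j + 1))) ∧ FreeVertex M B (z L) with hQ
  have hQex : ∃ L, Q L := by
    obtain ⟨c, hc⟩ := htail 0 (by omega)
    obtain ⟨n₁, p₁, hp0, hparc, hpfree⟩ :=
      exists_escape_walk hB hc (hnc 0 c (by omega) hc)
    exact ⟨n₁, p₁, ⟨0, by omega, hp0⟩, hparc, hpfree⟩
  set ℓ₀ := Nat.find hQex with hℓ₀
  obtain ⟨p, ⟨r₀, hr₀, hp0⟩, hparc, hpfree⟩ := Nat.find_spec hQex
  rw [← hℓ₀] at hparc hpfree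
  have hpathmin : ∀ L (z : ℕ → α), (∃ r, r < m₀ ∧ z 0 = x r) →
      (∀ j < L, ArcD M B (z j, z (j + 1))) → FreeVertex M B (z L) → ℓ₀ ≤ L := by
    intro L z h1 h2 h3
    exact Nat.find_le ⟨z, h1, h2, h3⟩
  have hℓ₀pos : 1 ≤ ℓ₀ := by
    by_contra h
    have h0 : ℓ₀ = 0 := by omega
    rw [h0] at hpfree
    obtain ⟨c, hc⟩ := htail r₀ hr₀
    exact hpfree.2 c (hp0 ▸ hc)
  -- the rerooted cycle followed by the path
  set w : ℕ → α := fun t => if t ≤ m₀ then x ((r₀ + t) % m₀) else p (t - m₀) with hw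
  set n := m₀ + ℓ₀ with hn
  have hwcyc : ∀ t, t ≤ m₀ → w t = x ((r₀ + t) % m₀) := fun t ht => if_pos ht
  have hwpath : ∀ t, m₀ ≤ t → w t = p (t - m₀) := by
    intro t ht
    rcases Nat.eq_or_lt_of_le ht with h | h
    · rw [← h, Nat.sub_self]
      rw [hwcyc m₀ le_rfl, Nat.add_mod_right, Nat.mod_eq_of_lt hr₀, hp0]
    · exact if_neg (by omega)
  -- basic facts about w
  have hwclosed : w m₀ = w 0 := by
    rw [hwcyc m₀ le_rfl, hwcyc 0 (by omega), Nat.add_mod_right, Nat.add_zero,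
      Nat.mod_eq_of_lt hr₀]
  have hmodsucc : ∀ a : ℕ, x ((a + 1) % m₀) = x (a % m₀ + 1) := by
    intro a
    have h1 : (a + 1) % m₀ = (a % m₀ + 1) % m₀ := by
      conv_lhs => rw [Nat.add_mod]
      rw [Nat.mod_eq_of_lt (show 1 < m₀ by omega)]
    rcases Nat.lt_or_ge (a % m₀ + 1) m₀ with h | h
    · rw [h1, Nat.mod_eq_of_lt h]
    · have ha : a % m₀ < m₀ := Nat.mod_lt _ (by omega)
      have h2 : a % m₀ + 1 = m₀ := by omega
      rw [h1, h2, Nat.mod_self]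
      exact hxc.symm
  have hwaligned : ∀ t, t < m₀ → AlignedArc M B B' (w t) (w (t + 1)) := by
    intro t ht
    rw [hwcyc t (by omega), hwcyc (t + 1) (by omega)]
    have ha : (r₀ + t) % m₀ < m₀ := Nat.mod_lt _ (by omega)
    have harc := hxarc ((r₀ + t) % m₀) ha
    have heq : x ((r₀ + (t + 1)) % m₀) = x ((r₀ + t) % m₀ + 1) := by
      rw [show r₀ + (t + 1) = (r₀ + t) + 1 by omega]
      exact hmodsucc (r₀ + t)
    rw [heq]
    exact harc
  have hwarcs : ∀ t, t < n → ArcD M B (w t, w (t + 1)) := by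
    intro t ht
    rcases Nat.lt_or_ge t m₀ with h | h
    · exact alignedArc_arcD hB' (hwaligned t h)
    · have h1 : w t = p (t - m₀) := hwpath t h
      have h2 : w (t + 1) = p (t + 1 - m₀) := hwpath (t + 1) (by omega)
      rw [h1, h2, show t + 1 - m₀ = (t - m₀) + 1 by omega]
      exact hparc (t - m₀) (by omega)
  have hwfree : FreeVertex M B (w n) := by
    rw [hwpath n (by omega), show n - m₀ = ℓ₀ by omega]
    exact hpfree
  have hwdist : ∀ s t, s < t → t ≤ n → w s = w t → s = 0 ∧ t = m₀ := by
    intro s t hst htn hwe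
    rcases Nat.lt_or_ge m₀ t with hmt | htm
    · exfalso
      rcases Nat.lt_or_ge m₀ s with hms | hsm
      · -- both on the path: splice a shorter path
        have he : p (s - m₀) = p (t - m₀) := by
          rw [← hwpath s (by omega), ← hwpath t (by omega)]
          exact hwe
        set d := t - s with hd
        have harcs2 : ∀ j < ℓ₀ - d,
            ArcD M B ((fun j => if j ≤ s - m₀ then p j else p (j + d)) j,
              (fun j => if j ≤ s - m₀ then p j else p (j + d)) (j + 1)) := by
          intro j hj
          dsimp only
          by_cases hjs : j + 1 ≤ s - m₀
          · rw [if_pos (by omega), if_pos hjs]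
            exact hparc j (by omega)
          · by_cases hjs' : j ≤ s - m₀
            · have hjeq : j = s - m₀ := by omega
              rw [if_pos hjs', if_neg hjs, hjeq, he,
                show s - m₀ + 1 + d = (t - m₀) + 1 by omega]
              exact hparc (t - m₀) (by omega)
            · rw [if_neg hjs', if_neg (by omega),
                show j + 1 + d = (j + d) + 1 by omega]
              exact hparc (j + d) (by omega)
        have hfree2 : FreeVertex M B
            ((fun j => if j ≤ s - m₀ then p j else p (j + d)) (ℓ₀ - d)) := by
          dsimp only
          by_cases hend : ℓ₀ - d ≤ s - m₀
          · rw [if_pos hend, show ℓ₀ - d = s - m₀ by omega, he,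
              show t - m₀ = ℓ₀ by omega]
            exact hpfree
          · rw [if_neg hend, show ℓ₀ - d + d = ℓ₀ by omega]
            exact hpfree
        have := hpathmin (ℓ₀ - d) (fun j => if j ≤ s - m₀ then p j else p (j + d))
          ⟨r₀, hr₀, by simp only [if_pos (Nat.zero_le _)]; exact hp0⟩ harcs2 hfree2
        omega
      · -- cycle vertex hit by the path: truncate
        have hs' : w s = x ((r₀ + s) % m₀) := hwcyc s hsm
        have ha : (r₀ + s) % m₀ < m₀ := Nat.mod_lt _ (by omega)
        have hstart : (fun j => p (t - m₀ + j)) 0 = x ((r₀ + s) % m₀) := by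
          dsimp only
          rw [Nat.add_zero, ← hwpath t (by omega), ← hwe]
          exact hs'
        have := hpathmin (ℓ₀ - (t - m₀)) (fun j => p (t - m₀ + j))
          ⟨(r₀ + s) % m₀, ha, hstart⟩
          (fun j hj => by
            rw [show t - m₀ + (j + 1) = (t - m₀ + j) + 1 by omega]
            exact hparc (t - m₀ + j) (by omega))
          (by
            rw [show t - m₀ + (ℓ₀ - (t - m₀)) = ℓ₀ by omega]
            exact hpfree)
        omega
    · -- both on the cycle
      have hs' : w s = x ((r₀ + s) % m₀) := hwcyc s (by omega)
      have ht' : w t = x ((r₀ + t) % m₀) := hwcyc t htm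
      have hab : x ((r₀ + s) % m₀) = x ((r₀ + t) % m₀) := by
        rw [← hs', ← ht', hwe]
      by_cases haeqb : (r₀ + s) % m₀ = (r₀ + t) % m₀
      · have h2 : s ≡ t [MOD m₀] := Nat.ModEq.add_left_cancel' r₀ haeqb
        have hdvd : m₀ ∣ (t - s) := (Nat.modEq_iff_dvd' (le_of_lt hst)).1 h2
        have hle : m₀ ≤ t - s := Nat.le_of_dvd (by omega) hdvd
        exact ⟨by omega, by omega⟩
      · exfalso
        have ha : (r₀ + s) % m₀ < m₀ := Nat.mod_lt _ (by omega)
        have hb : (r₀ + t) % m₀ < m₀ := Nat.mod_lt _ (by omega)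
        rcases Nat.lt_or_ge ((r₀ + s) % m₀) ((r₀ + t) % m₀) with h | h
        · have := hdist₀ _ _ h (by omega) hab
          omega
        · have := hdist₀ _ _ (by omega : (r₀ + t) % m₀ < (r₀ + s) % m₀)
            (by omega) hab.symm
          omega
  -- the no-chord property
  have hnochord : ∀ pp q, pp < n → q < n → ∀ c, w pp ∈ B c → w q ∈ B c →
      ¬(q = 0 ∨ q = m₀) → (pp = 0 ∨ pp = m₀ ∨ pp < q) →
      ¬ (M c).Bases (insert (w (q + 1)) ((B c).erase (w pp))) := by
    intro pp q hpn hqn c hpB hqB hqne hporder hches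
    push_neg at hqne
    obtain ⟨hqne0, hqnem⟩ := hqne
    rcases Nat.lt_or_ge q m₀ with hqm | hqm
    · -- cycle chord: build a shorter aligned closed walk
      have hq1 : 1 ≤ q := by omega
      have hqdata := alignedArc_data hB (hwaligned q hqm) hqB
      have hchord : AlignedArc M B B' (w pp) (w (q + 1)) :=
        ⟨c, hpB, hqdata.1, hqdata.2.1, hches⟩
      set p'' := if pp = m₀ then 0 else pp with hp''def
      have hwp'' : w p'' = w pp := by
        rw [hp''def]
        by_cases h : pp = m₀
        · rw [if_pos h, h]
          exact hwclosed.symm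
        · rw [if_neg h]
      have hp''q : p'' < q := by
        rw [hp''def]
        by_cases h : pp = m₀
        · rw [if_pos h]; omega
        · rw [if_neg h]
          rcases hporder with h' | h' | h'
          · omega
          · exact absurd h' h
          · omega
      set L := m₀ - q + p'' with hL
      set z : ℕ → α := fun j => if j ≤ m₀ - q - 1 then w (q + 1 + j)
        else if j ≤ m₀ - q - 1 + p'' then w (j - (m₀ - q - 1)) else w (q + 1) with hzdef
      have hz1 : ∀ j, j ≤ m₀ - q - 1 → z j = w (q + 1 + j) := fun j hj => if_pos hj
      have hz2 : ∀ j, m₀ - q - 1 < j → j ≤ m₀ - q - 1 + p'' →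
          z j = w (j - (m₀ - q - 1)) := by
        intro j h1 h2
        show (if j ≤ m₀ - q - 1 then w (q + 1 + j)
          else if j ≤ m₀ - q - 1 + p'' then w (j - (m₀ - q - 1)) else w (q + 1))
            = w (j - (m₀ - q - 1))
        rw [if_neg (by omega), if_pos h2]
      have hz3 : ∀ j, m₀ - q - 1 + p'' < j → z j = w (q + 1) := by
        intro j h1
        show (if j ≤ m₀ - q - 1 then w (q + 1 + j)
          else if j ≤ m₀ - q - 1 + p'' then w (j - (m₀ - q - 1)) else w (q + 1))
            = w (q + 1)
        rw [if_neg (by omega), if_neg (by omega)]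
      have hclosed2 : z L = z 0 := by
        rw [hz3 L (by omega), hz1 0 (by omega), Nat.add_zero]
      have harcs2 : ∀ j < L, AlignedArc M B B' (z j) (z (j + 1)) := by
        intro j hj
        rcases Nat.lt_or_ge (j + 1) (m₀ - q) with h1 | h1
        · rw [hz1 j (by omega), hz1 (j + 1) (by omega),
            show q + 1 + (j + 1) = (q + 1 + j) + 1 by omega]
          exact hwaligned (q + 1 + j) (by omega)
        · rcases Nat.lt_or_ge j (m₀ - q) with h2 | h2
          · -- j = m₀ - q - 1, so z j = w m₀ = w 0
            have hzj : z j = w 0 := by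
              rw [hz1 j (by omega), show q + 1 + j = m₀ by omega, hwclosed]
            by_cases hpz0 : p'' = 0
            · have hzj1 : z (j + 1) = w (q + 1) := hz3 (j + 1) (by omega)
              rw [hzj, hzj1, show w 0 = w p'' by rw [hpz0], hwp'']
              exact hchord
            · have hzj1 : z (j + 1) = w 1 := by
                rw [hz2 (j + 1) (by omega) (by omega),
                  show j + 1 - (m₀ - q - 1) = 1 by omega]
              rw [hzj, hzj1]
              exact hwaligned 0 (by omega)
          · rcases Nat.lt_or_ge j (m₀ - q - 1 + p'') with h3 | h3
            · rw [hz2 j (by omega) (by omega), hz2 (j + 1) (by omega) (by omega),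
                show j + 1 - (m₀ - q - 1) = (j - (m₀ - q - 1)) + 1 by omega]
              exact hwaligned (j - (m₀ - q - 1)) (by omega)
            · have hjeq : j = m₀ - q - 1 + p'' := by omega
              have hpz1 : 1 ≤ p'' := by omega
              have hzj : z j = w p'' := by
                rw [hz2 j (by omega) (by omega), show j - (m₀ - q - 1) = p'' by omega]
              have hzj1 : z (j + 1) = w (q + 1) := hz3 (j + 1) (by omega)
              rw [hzj, hzj1, hwp'']
              exact hchord
      have := hcycmin L z (by omega) hclosed2 harcs2
      omega
    · -- path chord: build a shorter escape path
      have hq1 : m₀ + 1 ≤ q := by omega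
      have hqdata := arcD_data hB (hwarcs q hqn) hqB
      have hchord : ArcD M B (w pp, w (q + 1)) := ⟨c, hpB, hqdata.1, hqdata.2.1, hches⟩
      set d := pp - m₀ with hddef
      set L := n - q + d with hLdef
      set z : ℕ → α := fun j => if j ≤ d then w (pp - d + j) else w (q + j - d) with hzdef
      have hz1 : ∀ j, j ≤ d → z j = w (pp - d + j) := fun j hj => if_pos hj
      have hz2 : ∀ j, d < j → z j = w (q + j - d) := by
        intro j h1
        show (if j ≤ d then w (pp - d + j) else w (q + j - d)) = w (q + j - d)
        rw [if_neg (by omega)]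
      have hppd : pp - d ≤ m₀ := by omega
      have hstart : ∃ r, r < m₀ ∧ z 0 = x r := by
        refine ⟨(r₀ + (pp - d)) % m₀, Nat.mod_lt _ (by omega), ?_⟩
        rw [hz1 0 (by omega), Nat.add_zero, hwcyc (pp - d) hppd]
      have harcs2 : ∀ j < L, ArcD M B (z j, z (j + 1)) := by
        intro j hj
        rcases Nat.lt_or_ge j d with h1 | h1
        · rw [hz1 j (by omega), hz1 (j + 1) (by omega),
            show pp - d + (j + 1) = (pp - d + j) + 1 by omega]
          exact hwarcs (pp - d + j) (by omega)
        · rcases Nat.eq_or_lt_of_le h1 with h2 | h2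
          · rw [hz1 j (by omega), hz2 (j + 1) (by omega),
              show pp - d + j = pp by omega, show q + (j + 1) - d = q + 1 by omega]
            exact hchord
          · rw [hz2 j h2, hz2 (j + 1) (by omega),
              show q + (j + 1) - d = (q + j - d) + 1 by omega]
            exact hwarcs (q + j - d) (by omega)
      have hfree2 : FreeVertex M B (z L) := by
        rw [hz2 L (by omega), show q + L - d = n by omega]
        exact hwfree
      have := hpathmin L z hstart harcs2 hfree2
      rcases Nat.lt_or_ge m₀ pp with hc1 | hc1
      · have hppq : pp < q := by
          rcases hporder with h | h | h
          · omega
          · omega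
          · exact h
        omega
      · omega
  exact ⟨⟨m₀, n, w, hm₀2, by omega, hwclosed, hwaligned, hwarcs, hwdist, hwfree, hnochord⟩⟩

end Tadpole

section Exec

variable {α : Type u} [DecidableEq α] {k : ℕ}

open Classical in
/-- The configuration obtained from `B` by applying the arcs of the walk `w`
with positions in `S`. -/
noncomputable def CfgS (B : Fin k → Finset α) (w : ℕ → α)
    (S : Finset ℕ) (c : Fin k) : Finset α :=
  (B c \ (S.filter (fun t => w t ∈ B c)).image w) ∪
    (S.filter (fun t => w t ∈ B c)).image (fun t => w (t + 1))

open Classical in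
theorem mem_CfgS {B : Fin k → Finset α} {w : ℕ → α} {S : Finset ℕ} {c : Fin k} {z : α} :
    z ∈ CfgS B w S c ↔
      ((z ∈ B c ∧ ∀ t ∈ S, w t ∈ B c → w t ≠ z) ∨
        (∃ t ∈ S, w t ∈ B c ∧ w (t + 1) = z)) := by
  simp only [CfgS, Finset.mem_union, Finset.mem_sdiff, Finset.mem_image,
    Finset.mem_filter]
  constructor
  · rintro (⟨h1, h2⟩ | ⟨t, ⟨ht, htB⟩, hte⟩)
    · exact Or.inl ⟨h1, fun t ht htB hte => h2 ⟨t, ⟨ht, htB⟩, hte⟩⟩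
    · exact Or.inr ⟨t, ht, htB, hte⟩
  · rintro (⟨h1, h2⟩ | ⟨t, ht, htB, hte⟩)
    · exact Or.inl ⟨h1, fun ⟨t, ⟨ht, htB⟩, hte⟩ => h2 t ht htB hte⟩
    · exact Or.inr ⟨t, ⟨ht, htB⟩, hte⟩

namespace TData

variable {M : Fin k → FinMatroid α} {B B' : Fin k → Finset α}

theorem w_tail_mem (W : TData M B B') {t : ℕ} (ht : t < W.n) : ∃ c, W.w t ∈ B c := by
  obtain ⟨c, h1, -⟩ := W.arcs t ht
  exact ⟨c, h1⟩

theorem head_not_mem (hB : FeasibleSeq M B) (W : TData M B B') {t : ℕ} (ht : t < W.n)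
    {c : Fin k} (hc : W.w t ∈ B c) : W.w (t + 1) ∉ B c :=
  (arcD_data hB (W.arcs t ht) hc).2.1

theorem head_ground (hB : FeasibleSeq M B) (W : TData M B B') {t : ℕ} (ht : t < W.n)
    {c : Fin k} (hc : W.w t ∈ B c) : W.w (t + 1) ∈ (M c).E :=
  (arcD_data hB (W.arcs t ht) hc).1

theorem head_basis (hB : FeasibleSeq M B) (W : TData M B B') {t : ℕ} (ht : t < W.n)
    {c : Fin k} (hc : W.w t ∈ B c) :
    (M c).Bases (insert (W.w (t + 1)) ((B c).erase (W.w t))) :=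
  (arcD_data hB (W.arcs t ht) hc).2.2

/-- Injectivity of tails on a set of positions not containing both `0` and `m`. -/
theorem tail_inj (W : TData M B B') {t t' : ℕ} (ht : t < W.n) (ht' : t' < W.n)
    (h0m : ¬(t = 0 ∧ t' = W.m) ∧ ¬(t = W.m ∧ t' = 0)) (he : W.w t = W.w t') : t = t' := by
  rcases Nat.lt_trichotomy t t' with h | h | h
  · have := W.distinct t t' h (by omega) he
    exact absurd ⟨this.1, this.2⟩ h0m.1
  · exact h
  · have := W.distinct t' t h (by omega) he.symm
    exact absurd ⟨this.2, this.1⟩ h0m.2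

theorem head_inj (W : TData M B B') {t t' : ℕ} (ht : t < W.n) (ht' : t' < W.n)
    (he : W.w (t + 1) = W.w (t' + 1)) : t = t' := by
  rcases Nat.lt_trichotomy t t' with h | h | h
  · have := W.distinct (t + 1) (t' + 1) (by omega) (by omega) he
    omega
  · exact h
  · have := W.distinct (t' + 1) (t + 1) (by omega) (by omega) he.symm
    omega

/-- A good position set. -/
def Good (W : TData M B B') (S : Finset ℕ) : Prop :=
  (∀ t ∈ S, t < W.n) ∧ ¬(0 ∈ S ∧ W.m ∈ S) ∧
    (∀ t ∈ S, t + 1 < W.n → ∃ q ∈ S, W.w q = W.w (t + 1))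

open Classical in
theorem CfgS_bases (hB : FeasibleSeq M B) (W : TData M B B') {S : Finset ℕ}
    (hG : W.Good S) (c : Fin k) : (M c).Bases (CfgS B W.w S c) := by
  classical
  obtain ⟨hSn, hS0m, -⟩ := hG
  have hSc : ∀ t ∈ S.filter (fun t => W.w t ∈ B c), t ∈ S ∧ W.w t ∈ B c := by
    intro t ht
    exact Finset.mem_filter.1 ht
  have happ := FinMatroid.multi_exchange (M := M c)
    (S.filter (fun t => W.w t ∈ B c)).card (B c)
    (S.filter (fun t => W.w t ∈ B c)) W.w (fun t => W.w (t + 1))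
    (fun t => if t = 0 ∨ t = W.m then 0 else t + 1) rfl (hB.1 c)
    (fun t ht => (hSc t ht).2)
    (fun t ht => W.head_not_mem hB (hSn t (hSc t ht).1) (hSc t ht).2)
    (fun t ht t' ht' he => W.tail_inj (hSn t (hSc t ht).1) (hSn t' (hSc t' ht').1)
      (by
        constructor
        · rintro ⟨h1, h2⟩
          exact hS0m ⟨h1 ▸ (hSc t ht).1, h2 ▸ (hSc t' ht').1⟩
        · rintro ⟨h1, h2⟩
          exact hS0m ⟨h2 ▸ (hSc t' ht').1, h1 ▸ (hSc t ht).1⟩) he)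
    (fun t ht t' ht' he => W.head_inj (hSn t (hSc t ht).1) (hSn t' (hSc t' ht').1) he)
    (fun t ht t' ht' he => by
      by_cases h1 : t = 0 ∨ t = W.m
      · rw [if_pos h1] at he
        by_cases h2 : t' = 0 ∨ t' = W.m
        · -- both roots: then both tails equal w 0, and not both 0, m in S
          rcases h1 with h1 | h1 <;> rcases h2 with h2 | h2
          · omega
          · exact absurd ⟨h1 ▸ (hSc t ht).1, h2 ▸ (hSc t' ht').1⟩ hS0m
          · exact absurd ⟨h2 ▸ (hSc t' ht').1, h1 ▸ (hSc t ht).1⟩ hS0m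
          · omega
        · rw [if_neg h2] at he
          omega
      · rw [if_neg h1] at he
        by_cases h2 : t' = 0 ∨ t' = W.m
        · rw [if_pos h2] at he
          omega
        · rw [if_neg h2] at he
          omega)
    (fun t ht => W.head_basis hB (hSn t (hSc t ht).1) (hSc t ht).2)
    (fun t ht t' ht' hκ => by
      by_cases h2 : t' = 0 ∨ t' = W.m
      · rw [if_pos h2] at hκ
        omega
      · rw [if_neg h2] at hκ
        refine W.nochord t t' (hSn t (hSc t ht).1) (hSn t' (hSc t' ht').1) c
          (hSc t ht).2 (hSc t' ht').2 h2 ?_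
        by_cases h1 : t = 0 ∨ t = W.m
        · rcases h1 with h1 | h1
          · exact Or.inl h1
          · exact Or.inr (Or.inl h1)
        · rw [if_neg h1] at hκ
          exact Or.inr (Or.inr (by omega)))
  exact happ

open Classical in
theorem CfgS_feasible (hB : FeasibleSeq M B) (W : TData M B B') {S : Finset ℕ}
    (hG : W.Good S) : FeasibleSeq M (fun c => CfgS B W.w S c) := by
  classical
  obtain ⟨hSn, hS0m, hsucc⟩ := hG
  refine ⟨fun c => W.CfgS_bases hB ⟨hSn, hS0m, hsucc⟩ c, ?_⟩
  intro c c' hcc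
  rw [Finset.disjoint_left]
  intro z hz hz'
  rw [mem_CfgS] at hz hz'
  rcases hz with ⟨h1, h2⟩ | ⟨t, ht, htB, hte⟩
  · rcases hz' with ⟨h1', h2'⟩ | ⟨t, ht, htB, hte⟩
    · exact Finset.disjoint_left.1 (hB.2 c c' hcc) h1 h1'
    · -- z ∈ B c untouched and z is a head for c'
      by_cases hn : t + 1 < W.n
      · obtain ⟨q, hq, hqe⟩ := hsucc t ht hn
        have hqB : W.w q ∈ B c := by rw [hqe, hte]; exact h1
        exact h2 q hq hqB (by rw [hqe, hte])
      · have htn : t + 1 = W.n := by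
          have := hSn t ht
          omega
        have := W.free.2 c
        rw [← htn, hte] at this
        exact this h1
  · rcases hz' with ⟨h1', h2'⟩ | ⟨t', ht', htB', hte'⟩
    · by_cases hn : t + 1 < W.n
      · obtain ⟨q, hq, hqe⟩ := hsucc t ht hn
        have hqB : W.w q ∈ B c' := by rw [hqe, hte]; exact h1'
        exact h2' q hq hqB (by rw [hqe, hte])
      · have htn : t + 1 = W.n := by
          have := hSn t ht
          omega
        have := W.free.2 c'
        rw [← htn, hte] at this
        exact this h1'
    · have : t = t' := W.head_inj (hSn t ht) (hSn t' ht') (by rw [hte, hte'])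
      subst this
      exact Finset.disjoint_left.1 (hB.2 c c' hcc) htB htB'

end TData

end Exec

section Exec2

variable {α : Type u} [DecidableEq α] {k : ℕ}

namespace TData

variable {M : Fin k → FinMatroid α} {B B' : Fin k → Finset α}

open Classical in
theorem step_insert (hB : FeasibleSeq M B) (W : TData M B B') {S : Finset ℕ} {t₀ : ℕ}
    (ht₀n : t₀ < W.n) (ht₀S : t₀ ∉ S)
    (h1 : ∀ q ∈ S, W.w q ≠ W.w t₀)
    (h2 : ∀ q ∈ S, W.w (q + 1) ≠ W.w t₀)
    (h3 : ∀ q ∈ S, W.w (q + 1) ≠ W.w (t₀ + 1)) :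
    AdjacentSeq M (fun c => CfgS B W.w S c) (fun c => CfgS B W.w (insert t₀ S) c) := by
  classical
  obtain ⟨c₀, hc₀⟩ := W.w_tail_mem ht₀n
  refine ⟨c₀, ?_, W.w t₀, ?_, W.w (t₀ + 1), W.head_ground hB ht₀n hc₀, ?_, ?_⟩
  · intro j hj
    dsimp only
    have hfil : (insert t₀ S).filter (fun t => W.w t ∈ B j)
        = S.filter (fun t => W.w t ∈ B j) := by
      rw [Finset.filter_insert, if_neg]
      intro hmem
      exact Finset.disjoint_left.1 (hB.2 c₀ j (Ne.symm hj)) hc₀ hmem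
    rw [CfgS, CfgS, hfil]
  · rw [mem_CfgS]
    exact Or.inl ⟨hc₀, fun t ht htB hte => h1 t ht hte⟩
  · rw [mem_CfgS]
    rintro (⟨hz1, hz2⟩ | ⟨t, ht, htB, hte⟩)
    · exact W.head_not_mem hB ht₀n hc₀ hz1
    · exact h3 t ht hte
  · ext z
    rw [mem_CfgS, Finset.mem_insert, Finset.mem_erase, mem_CfgS]
    constructor
    · rintro (⟨hz1, hz2⟩ | ⟨t, ht, htB, hte⟩)
      · refine Or.inr ⟨fun h => (hz2 t₀ (Finset.mem_insert_self _ _) hc₀ h.symm),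
          Or.inl ⟨hz1, ?_⟩⟩
        intro t htS htB' hte
        exact hz2 t (Finset.mem_insert_of_mem htS) htB' hte
      · rcases Finset.mem_insert.1 ht with h | h
        · subst h
          exact Or.inl hte.symm
        · refine Or.inr ⟨?_, Or.inr ⟨t, h, htB, hte⟩⟩
          intro hze
          exact h2 t h (hte.trans hze)
    · rintro (hz | ⟨hzt₀, (⟨hz1, hz2⟩ | ⟨t, ht, htB, hte⟩)⟩)
      · exact Or.inr ⟨t₀, Finset.mem_insert_self _ _, hc₀, hz.symm⟩
      · refine Or.inl ⟨hz1, ?_⟩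
        intro t ht htB'
        rcases Finset.mem_insert.1 ht with h | h
        · subst h
          exact fun he => hzt₀ he.symm
        · exact hz2 t h htB'
      · exact Or.inr ⟨t, Finset.mem_insert_of_mem ht, htB, hte⟩

open Classical in
theorem step_erase (hB : FeasibleSeq M B) (W : TData M B B') {S : Finset ℕ} {t₀ : ℕ}
    (ht₀n : t₀ < W.n) (ht₀S : t₀ ∈ S)
    (h1 : ∀ q ∈ S, q ≠ t₀ → W.w q ≠ W.w t₀)
    (h2 : ∀ q ∈ S, W.w (q + 1) ≠ W.w t₀)
    (h3 : ∀ q ∈ S, q ≠ t₀ → W.w (q + 1) ≠ W.w (t₀ + 1)) :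
    AdjacentSeq M (fun c => CfgS B W.w S c) (fun c => CfgS B W.w (S.erase t₀) c) := by
  classical
  obtain ⟨c₀, hc₀⟩ := W.w_tail_mem ht₀n
  refine ⟨c₀, ?_, W.w (t₀ + 1), ?_, W.w t₀,
    (M c₀).mem_ground_of_mem_basis (hB.1 c₀) hc₀, ?_, ?_⟩
  · intro j hj
    dsimp only
    have hfil : (S.erase t₀).filter (fun t => W.w t ∈ B j)
        = S.filter (fun t => W.w t ∈ B j) := by
      rw [Finset.filter_erase]
      refine Finset.erase_eq_of_notMem ?_
      intro hmem
      exact Finset.disjoint_left.1 (hB.2 c₀ j (Ne.symm hj)) hc₀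
        (Finset.mem_filter.1 hmem).2
    rw [CfgS, CfgS, hfil]
  · rw [mem_CfgS]
    exact Or.inr ⟨t₀, ht₀S, hc₀, rfl⟩
  · rw [mem_CfgS]
    rintro (⟨hz1, hz2⟩ | ⟨t, ht, htB, hte⟩)
    · exact hz2 t₀ ht₀S hc₀ rfl
    · exact h2 t ht hte
  · ext z
    rw [mem_CfgS, Finset.mem_insert, Finset.mem_erase, mem_CfgS]
    constructor
    · rintro (⟨hz1, hz2⟩ | ⟨t, ht, htB, hte⟩)
      · by_cases hze : z = W.w t₀
        · exact Or.inl hze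
        · refine Or.inr ⟨?_, Or.inl ⟨hz1, ?_⟩⟩
          · intro h
            exact W.head_not_mem hB ht₀n hc₀ (h ▸ hz1)
          · intro t ht htB
            by_cases htt : t = t₀
            · subst htt
              exact fun he => hze he.symm
            · exact hz2 t (Finset.mem_erase.2 ⟨htt, ht⟩) htB
      · have htt : t ≠ t₀ := (Finset.mem_erase.1 ht).1
        exact Or.inr ⟨fun h => h3 t (Finset.mem_of_mem_erase ht) htt (hte.trans h),
          Or.inr ⟨t, Finset.mem_of_mem_erase ht, htB, hte⟩⟩
    · rintro (hz | ⟨hzn, (⟨hz1, hz2⟩ | ⟨t, ht, htB, hte⟩)⟩)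
      · subst hz
        refine Or.inl ⟨hc₀, ?_⟩
        intro t ht htB
        exact h1 t (Finset.mem_of_mem_erase ht) (Finset.mem_erase.1 ht).1
      · exact Or.inl ⟨hz1, fun t ht htB => hz2 t (Finset.mem_of_mem_erase ht) htB⟩
      · have htt : t ≠ t₀ := fun h => hzn (by rw [← hte, h])
        exact Or.inr ⟨t, Finset.mem_erase.2 ⟨htt, ht⟩, htB, hte⟩

open Classical in
theorem step_swap (hB : FeasibleSeq M B) (W : TData M B B') {S : Finset ℕ}
    (hmS : W.m ∈ S) (h0S : 0 ∉ S)
    (h2 : ∀ q ∈ S, q ≠ W.m → W.w (q + 1) ≠ W.w (W.m + 1))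
    (h3 : ∀ q ∈ S, W.w (q + 1) ≠ W.w 1) :
    AdjacentSeq M (fun c => CfgS B W.w S c)
      (fun c => CfgS B W.w (insert 0 (S.erase W.m)) c) := by
  classical
  have hmn : W.m < W.n := W.hmn
  obtain ⟨c₀, hc₀⟩ := W.w_tail_mem hmn
  have hc₀0 : W.w 0 ∈ B c₀ := W.closed ▸ hc₀
  have h0n : (0 : ℕ) < W.n := by omega
  refine ⟨c₀, ?_, W.w (W.m + 1), ?_, W.w 1, W.head_ground hB h0n hc₀0, ?_, ?_⟩
  · intro j hj
    dsimp only
    have hw0 : W.w 0 ∉ B j :=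
      fun hmem => Finset.disjoint_left.1 (hB.2 c₀ j (Ne.symm hj)) hc₀0 hmem
    have hwm : W.w W.m ∉ B j := W.closed ▸ hw0
    have hfil : (insert 0 (S.erase W.m)).filter (fun t => W.w t ∈ B j)
        = S.filter (fun t => W.w t ∈ B j) := by
      rw [Finset.filter_insert, if_neg hw0, Finset.filter_erase]
      refine Finset.erase_eq_of_notMem ?_
      intro hmem
      exact hwm (Finset.mem_filter.1 hmem).2
    rw [CfgS, CfgS, hfil]
  · rw [mem_CfgS]
    exact Or.inr ⟨W.m, hmS, hc₀, rfl⟩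
  · rw [mem_CfgS]
    rintro (⟨hz1, hz2⟩ | ⟨t, ht, htB, hte⟩)
    · exact W.head_not_mem hB h0n hc₀0 hz1
    · exact h3 t ht hte
  · ext z
    rw [mem_CfgS, Finset.mem_insert, Finset.mem_erase, mem_CfgS]
    constructor
    · rintro (⟨hz1, hz2⟩ | ⟨t, ht, htB, hte⟩)
      · refine Or.inr ⟨fun h => W.head_not_mem hB hmn hc₀ (h ▸ hz1), Or.inl ⟨hz1, ?_⟩⟩
        intro t ht htB
        by_cases htm : t = W.m
        · subst htm
          have := hz2 0 (Finset.mem_insert_self _ _) hc₀0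
          rw [← W.closed] at this
          exact this
        · exact hz2 t (Finset.mem_insert_of_mem (Finset.mem_erase.2 ⟨htm, ht⟩)) htB
      · rcases Finset.mem_insert.1 ht with h | h
        · subst h
          exact Or.inl hte.symm
        · have htm : t ≠ W.m := (Finset.mem_erase.1 h).1
          exact Or.inr ⟨fun hc => h2 t (Finset.mem_of_mem_erase h) htm (hte.trans hc),
            Or.inr ⟨t, Finset.mem_of_mem_erase h, htB, hte⟩⟩
    · rintro (hz | ⟨hzn, (⟨hz1, hz2⟩ | ⟨t, ht, htB, hte⟩)⟩)
      · exact Or.inr ⟨0, Finset.mem_insert_self _ _, hc₀0, hz.symm⟩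
      · refine Or.inl ⟨hz1, ?_⟩
        intro t ht htB
        rcases Finset.mem_insert.1 ht with h | h
        · subst h
          have := hz2 W.m hmS hc₀
          rw [W.closed] at this
          exact this
        · exact hz2 t (Finset.mem_of_mem_erase h) htB
      · by_cases htm : t = W.m
        · subst htm
          exact absurd hte.symm hzn
        · exact Or.inr ⟨t, Finset.mem_insert_of_mem (Finset.mem_erase.2 ⟨htm, ht⟩), htB, hte⟩

end TData

end Exec2

section Exec3

variable {α : Type u} [DecidableEq α] {k : ℕ}

namespace TData

variable {M : Fin k → FinMatroid α} {B B' : Fin k → Finset α}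

theorem cycle_tail_not_B' (hB : FeasibleSeq M B) (hB' : FeasibleSeq M B')
    (W : TData M B B') {t : ℕ} (ht : t < W.m) {c : Fin k} (hc : W.w t ∈ B c) :
    W.w t ∉ B' c := by
  have hm2 : 2 ≤ W.m := W.hm
  have hprev : ∃ c', W.w t ∈ B' c' ∧ W.w t ∉ B c' := by
    rcases Nat.eq_zero_or_pos t with h0 | hpos
    · obtain ⟨c', h1, h2, h3, -⟩ := W.aligned (W.m - 1) (by omega)
      rw [show W.m - 1 + 1 = W.m by omega, W.closed, ← h0] at h2 h3
      exact ⟨c', h2, h3⟩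
    · obtain ⟨c', h1, h2, h3, -⟩ := W.aligned (t - 1) (by omega)
      rw [show t - 1 + 1 = t by omega] at h2 h3
      exact ⟨c', h2, h3⟩
  obtain ⟨c', h1, h2⟩ := hprev
  have hne : c' ≠ c := fun h => h2 (h ▸ hc)
  intro hcon
  exact Finset.disjoint_left.1 (hB'.2 c' c hne) h1 hcon

theorem cycle_head_B' (hB : FeasibleSeq M B) (W : TData M B B') {t : ℕ} (ht : t < W.m)
    {c : Fin k} (hc : W.w t ∈ B c) : W.w (t + 1) ∈ B' c :=
  (alignedArc_data hB (W.aligned t ht) hc).1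

open Classical in
theorem progress (hB : FeasibleSeq M B) (hB' : FeasibleSeq M B') (W : TData M B B') :
    ∃ B₂ : Fin k → Finset α, FeasibleSeq M B₂ ∧ Reconfigurable M B B₂ ∧
      (∑ c, ((B' c) \ (B₂ c)).card) + 1 ≤ ∑ c, ((B' c) \ (B c)).card := by
  classical
  have hm2 : 2 ≤ W.m := W.hm
  have hmn : W.m < W.n := W.hmn
  set m := W.m with hmdef
  set n := W.n with hndef
  set ℓ := n - m with hℓdef
  have hℓ : 1 ≤ ℓ := by omega
  set N := 2 * ℓ + m - 1 with hNdef
  set App : ℕ → Finset ℕ := fun s =>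
    if s ≤ ℓ + (m - 1) then Finset.Ico (n - s) n
    else insert 0 (Finset.Ico 1 m ∪ Finset.Ico (s - ℓ + 1) n) with hApp
  have hApp1 : ∀ s, s ≤ ℓ + (m - 1) → App s = Finset.Ico (n - s) n := by
    intro s hs
    rw [hApp]
    exact if_pos hs
  have hApp2 : ∀ s, ¬(s ≤ ℓ + (m - 1)) →
      App s = insert 0 (Finset.Ico 1 m ∪ Finset.Ico (s - ℓ + 1) n) := by
    intro s hs
    rw [hApp]
    exact if_neg hs
  have hmemn : ∀ s t, t ∈ App s → t < n := by
    intro s t ht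
    by_cases h : s ≤ ℓ + (m - 1)
    · rw [hApp1 s h, Finset.mem_Ico] at ht
      omega
    · rw [hApp2 s h] at ht
      rcases Finset.mem_insert.1 ht with h0 | h0
      · omega
      · rcases Finset.mem_union.1 h0 with h1 | h1 <;> rw [Finset.mem_Ico] at h1 <;> omega
  have hgood : ∀ s, s ≤ N → W.Good (App s) := by
    intro s hs
    refine ⟨fun t ht => hmemn s t ht, ?_, ?_⟩
    · rintro ⟨h0, hmm⟩
      by_cases h : s ≤ ℓ + (m - 1)
      · rw [hApp1 s h, Finset.mem_Ico] at h0
        omega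
      · rw [hApp2 s h] at hmm
        rcases Finset.mem_insert.1 hmm with h1 | h1
        · omega
        · rcases Finset.mem_union.1 h1 with h2 | h2 <;> rw [Finset.mem_Ico] at h2 <;> omega
    · intro t htm h1
      by_cases h : s ≤ ℓ + (m - 1)
      · rw [hApp1 s h, Finset.mem_Ico] at htm
        rw [hApp1 s h]
        exact ⟨t + 1, Finset.mem_Ico.2 ⟨by omega, by omega⟩, rfl⟩
      · rw [hApp2 s h] at htm
        rw [hApp2 s h]
        rcases Finset.mem_insert.1 htm with h0 | h0
        · subst h0
          exact ⟨1, Finset.mem_insert_of_mem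
            (Finset.mem_union_left _ (Finset.mem_Ico.2 ⟨le_rfl, by omega⟩)), rfl⟩
        · rcases Finset.mem_union.1 h0 with h2 | h2
          · rw [Finset.mem_Ico] at h2
            by_cases h3 : t + 1 < m
            · exact ⟨t + 1, Finset.mem_insert_of_mem
                (Finset.mem_union_left _ (Finset.mem_Ico.2 ⟨by omega, h3⟩)), rfl⟩
            · have h4 : t + 1 = m := by omega
              refine ⟨0, Finset.mem_insert_self _ _, ?_⟩
              rw [h4]
              exact W.closed.symm
          · rw [Finset.mem_Ico] at h2
            exact ⟨t + 1, Finset.mem_insert_of_mem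
              (Finset.mem_union_right _ (Finset.mem_Ico.2 ⟨by omega, by omega⟩)), rfl⟩
  have hadj : ∀ s, s < N → AdjacentSeq M (fun c => CfgS B W.w (App s) c)
      (fun c => CfgS B W.w (App (s + 1)) c) := by
    intro s hs
    by_cases hr1 : s + 1 ≤ ℓ + (m - 1)
    · have hAs : App s = Finset.Ico (n - s) n := hApp1 s (by omega)
      have hAs1 : App (s + 1) = insert (n - s - 1) (Finset.Ico (n - s) n) := by
        rw [hApp1 (s + 1) hr1]
        ext t
        simp only [Finset.mem_Ico, Finset.mem_insert]
        omega
      rw [hAs, hAs1]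
      have ht₀ : n - s - 1 < n := by omega
      have ht₀pos : 1 ≤ n - s - 1 := by omega
      refine W.step_insert hB ht₀ ?_ ?_ ?_ ?_
      · rw [Finset.mem_Ico]
        omega
      · intro q hq he
        rw [Finset.mem_Ico] at hq
        have := W.distinct (n - s - 1) q (by omega) (by omega) he.symm
        omega
      · intro q hq he
        rw [Finset.mem_Ico] at hq
        have := W.distinct (n - s - 1) (q + 1) (by omega) (by omega) he.symm
        omega
      · intro q hq he
        rw [Finset.mem_Ico] at hq
        have := W.head_inj (show q < W.n by omega) (show n - s - 1 < W.n by omega) he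
        omega
    · by_cases hr2 : s ≤ ℓ + (m - 1)
      · have hseq : s = ℓ + (m - 1) := by omega
        have hAs : App s = Finset.Ico 1 n := by
          rw [hApp1 s hr2, hseq, show n - (ℓ + (m - 1)) = 1 by omega]
        have hAs1 : App (s + 1) = insert 0 ((Finset.Ico 1 n).erase m) := by
          rw [hApp2 (s + 1) (by omega)]
          congr 1
          ext t
          simp only [Finset.mem_union, Finset.mem_Ico, Finset.mem_erase]
          omega
        rw [hAs, hAs1]
        refine W.step_swap hB ?_ ?_ ?_ ?_
        · exact Finset.mem_Ico.2 ⟨by omega, by omega⟩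
        · rw [Finset.mem_Ico]
          omega
        · intro q hq hqm he
          rw [Finset.mem_Ico] at hq
          have := W.head_inj (show q < W.n by omega) (show W.m < W.n by omega) he
          omega
        · intro q hq he
          rw [Finset.mem_Ico] at hq
          have := W.distinct 1 (q + 1) (by omega) (by omega) he.symm
          omega
      · have hAs : App s = insert 0 (Finset.Ico 1 m ∪ Finset.Ico (s - ℓ + 1) n) :=
          hApp2 s hr2
        have hAs1 : App (s + 1)
            = (insert 0 (Finset.Ico 1 m ∪ Finset.Ico (s - ℓ + 1) n)).erase (s - ℓ + 1) := by
          rw [hApp2 (s + 1) (by omega)]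
          ext t
          simp only [Finset.mem_insert, Finset.mem_union, Finset.mem_Ico, Finset.mem_erase]
          omega
        rw [hAs, hAs1]
        have ht₀m : m + 1 ≤ s - ℓ + 1 := by omega
        have ht₀n : s - ℓ + 1 < n := by omega
        have hmem' : ∀ q, q ∈ insert 0 (Finset.Ico 1 m ∪ Finset.Ico (s - ℓ + 1) n) →
            q < n ∧ q ≠ s - ℓ := by
          intro q hq
          rcases Finset.mem_insert.1 hq with h0 | h0
          · omega
          · rcases Finset.mem_union.1 h0 with h1 | h1 <;> rw [Finset.mem_Ico] at h1 <;> omega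
        refine W.step_erase hB ht₀n ?_ ?_ ?_ ?_
        · exact Finset.mem_insert_of_mem (Finset.mem_union_right _
            (Finset.mem_Ico.2 ⟨le_rfl, ht₀n⟩))
        · intro q hq hqt he
          have hqn := (hmem' q hq).1
          have := W.tail_inj (show q < W.n from hqn) (show s - ℓ + 1 < W.n from ht₀n)
            ⟨by rintro ⟨h1, h2⟩; omega, by rintro ⟨h1, h2⟩; omega⟩ he
          exact hqt this
        · intro q hq he
          obtain ⟨hqn, hqsl⟩ := hmem' q hq
          by_cases hqq : q + 1 = s - ℓ + 1
          · omega
          · rcases Nat.lt_or_ge (q + 1) (s - ℓ + 1) with hlt | hge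
            · have := W.distinct (q + 1) (s - ℓ + 1) hlt (by omega) he
              omega
            · have := W.distinct (s - ℓ + 1) (q + 1) (by omega) (by omega) he.symm
              omega
        · intro q hq hqt he
          have hqn := (hmem' q hq).1
          have := W.head_inj (show q < W.n from hqn) (show s - ℓ + 1 < W.n from ht₀n) he
          exact hqt this
  have hCfg0 : (fun c => CfgS B W.w (App 0) c) = B := by
    funext c
    have h0 : App 0 = (∅ : Finset ℕ) := by
      rw [hApp1 0 (by omega), Nat.sub_zero, Finset.Ico_self]
    rw [h0, CfgS]
    simp
  have hfinApp : App N = Finset.Ico 0 m := by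
    rw [hApp2 N (by omega)]
    ext t
    simp only [Finset.mem_insert, Finset.mem_union, Finset.mem_Ico]
    omega
  have hgoodfin : W.Good (Finset.Ico 0 m) := by
    rw [← hfinApp]
    exact hgood N le_rfl
  have hrec : Reconfigurable M B (fun c => CfgS B W.w (Finset.Ico 0 m) c) := by
    refine ⟨N, fun s => (fun c => CfgS B W.w (App s) c), hCfg0, ?_, ?_, hadj⟩
    · show (fun c => CfgS B W.w (App N) c) = _
      rw [hfinApp]
    · intro t ht
      exact W.CfgS_feasible hB (hgood t ht)
  have hfeas2 : FeasibleSeq M (fun c => CfgS B W.w (Finset.Ico 0 m) c) :=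
    W.CfgS_feasible hB hgoodfin
  -- the potential decreases
  have hkey : ∀ c, (B' c) \ (CfgS B W.w (Finset.Ico 0 m) c)
      = ((B' c) \ (B c)) \ (((Finset.Ico 0 m).filter (fun t => W.w t ∈ B c)).image
        (fun t => W.w (t + 1))) := by
    intro c
    ext z
    simp only [Finset.mem_sdiff, Finset.mem_image, Finset.mem_filter]
    constructor
    · rintro ⟨hz1, hz2⟩
      rw [mem_CfgS] at hz2
      refine ⟨⟨hz1, fun hzB => ?_⟩, fun hzH => ?_⟩
      · by_cases hall : ∀ t ∈ Finset.Ico 0 m, W.w t ∈ B c → W.w t ≠ z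
        · exact hz2 (Or.inl ⟨hzB, hall⟩)
        · push_neg at hall
          obtain ⟨t, ht, htB, hte⟩ := hall
          rw [Finset.mem_Ico] at ht
          exact (W.cycle_tail_not_B' hB hB' (show t < W.m by omega) htB)
            (by rw [hte]; exact hz1)
      · obtain ⟨t, ⟨ht, htB⟩, hte⟩ := hzH
        exact hz2 (Or.inr ⟨t, ht, htB, hte⟩)
    · rintro ⟨⟨hz1, hz2⟩, hz3⟩
      refine ⟨hz1, ?_⟩
      rw [mem_CfgS]
      rintro (⟨h4, -⟩ | ⟨t, ht, htB, hte⟩)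
      · exact hz2 h4
      · exact hz3 ⟨t, ⟨ht, htB⟩, hte⟩
  have hsub : ∀ c, (((Finset.Ico 0 m).filter (fun t => W.w t ∈ B c)).image
      (fun t => W.w (t + 1))) ⊆ (B' c) \ (B c) := by
    intro c z hz
    obtain ⟨t, ht, hte⟩ := Finset.mem_image.1 hz
    obtain ⟨ht1, ht2⟩ := Finset.mem_filter.1 ht
    rw [Finset.mem_Ico] at ht1
    rw [← hte]
    exact Finset.mem_sdiff.2 ⟨W.cycle_head_B' hB (show t < W.m by omega) ht2,
      W.head_not_mem hB (show t < W.n by omega) ht2⟩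
  have hHcard : ∀ c, (((Finset.Ico 0 m).filter (fun t => W.w t ∈ B c)).image
      (fun t => W.w (t + 1))).card
      = ((Finset.Ico 0 m).filter (fun t => W.w t ∈ B c)).card := by
    intro c
    refine Finset.card_image_of_injOn ?_
    intro t ht t' ht' he
    simp only [Finset.coe_filter, Set.mem_setOf_eq, Finset.mem_Ico] at ht ht'
    exact W.head_inj (show t < W.n by omega) (show t' < W.n by omega) he
  have hpart : ∑ c, ((Finset.Ico 0 m).filter (fun t => W.w t ∈ B c)).card = m := by
    have hset : Finset.Ico 0 m
        = Finset.univ.biUnion (fun c => (Finset.Ico 0 m).filter (fun t => W.w t ∈ B c)) := by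
      ext t
      simp only [Finset.mem_biUnion, Finset.mem_filter, Finset.mem_univ, true_and]
      constructor
      · intro ht
        have htn : t < W.n := by
          rw [Finset.mem_Ico] at ht
          omega
        obtain ⟨c, hc⟩ := W.w_tail_mem htn
        exact ⟨c, ht, hc⟩
      · rintro ⟨c, ht, -⟩
        exact ht
    have hcb : (Finset.univ.biUnion
        (fun c => (Finset.Ico 0 m).filter (fun t => W.w t ∈ B c))).card
        = ∑ c, ((Finset.Ico 0 m).filter (fun t => W.w t ∈ B c)).card := by
      refine Finset.card_biUnion ?_
      intro i _ j _ hij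
      rw [Function.onFun, Finset.disjoint_left]
      intro t hti htj
      exact Finset.disjoint_left.1 (hB.2 i j hij) (Finset.mem_filter.1 hti).2
        (Finset.mem_filter.1 htj).2
    rw [← hset] at hcb
    rw [← hcb, Nat.card_Ico]
    omega
  have h1 : ∀ c, ((B' c) \ (CfgS B W.w (Finset.Ico 0 m) c)).card
      + ((Finset.Ico 0 m).filter (fun t => W.w t ∈ B c)).card
      = ((B' c) \ (B c)).card := by
    intro c
    have hle := Finset.card_le_card (hsub c)
    rw [hHcard c] at hle
    rw [hkey c, Finset.card_sdiff_of_subset (hsub c), hHcard c]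
    omega
  have hsums : (∑ c, ((B' c) \ (CfgS B W.w (Finset.Ico 0 m) c)).card) + m
      = ∑ c, ((B' c) \ (B c)).card := by
    calc (∑ c, ((B' c) \ (CfgS B W.w (Finset.Ico 0 m) c)).card) + m
        = (∑ c, ((B' c) \ (CfgS B W.w (Finset.Ico 0 m) c)).card)
          + ∑ c, ((Finset.Ico 0 m).filter (fun t => W.w t ∈ B c)).card := by rw [hpart]
      _ = ∑ c, (((B' c) \ (CfgS B W.w (Finset.Ico 0 m) c)).card
          + ((Finset.Ico 0 m).filter (fun t => W.w t ∈ B c)).card) :=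
        (Finset.sum_add_distrib).symm
      _ = ∑ c, ((B' c) \ (B c)).card := Finset.sum_congr rfl (fun c _ => h1 c)
  refine ⟨fun c => CfgS B W.w (Finset.Ico 0 m) c, hfeas2, hrec, ?_⟩
  show (∑ c, ((B' c) \ (CfgS B W.w (Finset.Ico 0 m) c)).card) + 1
      ≤ ∑ c, ((B' c) \ (B c)).card
  omega

end TData

end Exec3

section Main

variable {α : Type u} [DecidableEq α] {k : ℕ}

theorem coloop_inter_eq_of_reconfig {M : Fin k → FinMatroid α} {B B₂ : Fin k → Finset α}
    (h : Reconfigurable M B B₂) :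
    ∀ c, {x | IsUnionColoop M x} ∩ ((B c : Finset α) : Set α)
      = {x | IsUnionColoop M x} ∩ ((B₂ c : Finset α) : Set α) := by
  obtain ⟨ℓ, seq, h0, h1, hf, ha⟩ := h
  have key : ∀ t, t ≤ ℓ → ∀ c, {x | IsUnionColoop M x} ∩ ((seq 0 c : Finset α) : Set α)
      = {x | IsUnionColoop M x} ∩ ((seq t c : Finset α) : Set α) := by
    intro t
    induction t with
    | zero => intro _ c; rfl
    | succ t iht =>
      intro ht c
      rw [iht (by omega) c]
      exact coloop_inter_eq_of_adjacent (hf t (by omega)) (hf (t + 1) ht)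
        (ha t (by omega)) c
  intro c
  rw [← h0, ← h1]
  exact key ℓ le_rfl c

open Classical in
theorem caseA_step {M : Fin k → FinMatroid α} {B B' : Fin k → Finset α}
    (hB : FeasibleSeq M B) (hB' : FeasibleSeq M B')
    (hJ : Finset.univ.biUnion B ≠ Finset.univ.biUnion B') :
    ∃ B₂ : Fin k → Finset α, FeasibleSeq M B₂ ∧ Reconfigurable M B B₂ ∧
      (∑ c, ((B' c) \ (B₂ c)).card) + 1 ≤ ∑ c, ((B' c) \ (B c)).card := by
  classical
  have hcard : (Finset.univ.biUnion B).card = (Finset.univ.biUnion B').card := by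
    rw [feasible_union_card hB, feasible_union_card hB']
    exact Finset.sum_congr rfl fun c _ => (M c).card_eq_of_bases (hB.1 c) (hB'.1 c)
  have hex : ∃ y, y ∈ Finset.univ.biUnion B' ∧ y ∉ Finset.univ.biUnion B := by
    by_contra hcon
    push_neg at hcon
    exact hJ (Finset.eq_of_subset_of_card_le hcon (le_of_eq hcard)).symm
  obtain ⟨y, hyJ', hyJ⟩ := hex
  obtain ⟨i, -, hyB'⟩ := Finset.mem_biUnion.1 hyJ'
  have hyB : y ∉ B i := fun h => hyJ (Finset.mem_biUnion.2 ⟨i, Finset.mem_univ i, h⟩)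
  obtain ⟨x, hxB, hxB', hbasis⟩ := FinMatroid.coexchange (hB.1 i) (hB'.1 i) hyB' hyB
  set B₂ := Function.update B i (insert y ((B i).erase x)) with hB₂def
  have hB₂i : B₂ i = insert y ((B i).erase x) := Function.update_self i _ B
  have hB₂j : ∀ j, j ≠ i → B₂ j = B j := fun j hj => Function.update_of_ne hj _ B
  have hB₂ : FeasibleSeq M B₂ := by
    constructor
    · intro c
      by_cases hci : c = i
      · subst hci
        rw [hB₂i]
        exact hbasis
      · rw [hB₂j c hci]
        exact hB.1 c
    · intro c c' hcc
      have hnewsub : ∀ j, j ≠ i → Disjoint (insert y ((B i).erase x)) (B j) := by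
        intro j hj
        rw [Finset.disjoint_left]
        intro a ha ha'
        rcases Finset.mem_insert.1 ha with h | h
        · exact hyJ (Finset.mem_biUnion.2 ⟨j, Finset.mem_univ j, h ▸ ha'⟩)
        · exact Finset.disjoint_left.1 (hB.2 i j (Ne.symm hj))
            (Finset.mem_of_mem_erase h) ha'
      by_cases hci : c = i
      · subst hci
        rw [hB₂i, hB₂j c' (Ne.symm hcc)]
        exact hnewsub c' (Ne.symm hcc)
      · by_cases hci' : c' = i
        · subst hci'
          rw [hB₂i, hB₂j c hci]
          exact (hnewsub c hci).symm
        · rw [hB₂j c hci, hB₂j c' hci']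
          exact hB.2 c c' hcc
  have hadj : AdjacentSeq M B B₂ :=
    ⟨i, fun j hj => (hB₂j j hj).symm, x, hxB, y,
      (M i).mem_ground_of_mem_basis (hB'.1 i) hyB', hyB, hB₂i⟩
  have hdiffi : (B' i) \ (B₂ i) = ((B' i) \ (B i)).erase y := by
    rw [hB₂i]
    ext z
    constructor
    · intro hz
      obtain ⟨hz1, hz2⟩ := Finset.mem_sdiff.1 hz
      have hzy : z ≠ y := fun h => hz2 (by rw [h]; exact Finset.mem_insert_self y _)
      have hzB : z ∉ B i := by
        intro hzB
        have hzx : z ≠ x := fun h => hxB' (h ▸ hz1)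
        exact hz2 (Finset.mem_insert_of_mem (Finset.mem_erase.2 ⟨hzx, hzB⟩))
      exact Finset.mem_erase.2 ⟨hzy, Finset.mem_sdiff.2 ⟨hz1, hzB⟩⟩
    · intro hz
      obtain ⟨hzy, hz2⟩ := Finset.mem_erase.1 hz
      obtain ⟨hz1, hzB⟩ := Finset.mem_sdiff.1 hz2
      refine Finset.mem_sdiff.2 ⟨hz1, ?_⟩
      intro hc
      rcases Finset.mem_insert.1 hc with h | h
      · exact hzy h
      · exact hzB (Finset.mem_of_mem_erase h)
  have hcards : (∑ c, ((B' c) \ (B₂ c)).card) + 1 = ∑ c, ((B' c) \ (B c)).card := by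
    have hsplit : ∀ (f : Fin k → ℕ),
        (∑ c, f c) = f i + ∑ c ∈ Finset.univ.erase i, f c := by
      intro f
      rw [← Finset.add_sum_erase _ f (Finset.mem_univ i)]
    have heq : ∑ c ∈ Finset.univ.erase i, ((B' c) \ (B₂ c)).card
        = ∑ c ∈ Finset.univ.erase i, ((B' c) \ (B c)).card := by
      refine Finset.sum_congr rfl (fun c hc => ?_)
      rw [hB₂j c (Finset.ne_of_mem_erase hc)]
    have hicard : ((B' i) \ (B₂ i)).card + 1 = ((B' i) \ (B i)).card := by
      rw [hdiffi, Finset.card_erase_of_mem (Finset.mem_sdiff.2 ⟨hyB', hyB⟩)]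
      have : 0 < ((B' i) \ (B i)).card :=
        Finset.card_pos.2 ⟨y, Finset.mem_sdiff.2 ⟨hyB', hyB⟩⟩
      omega
    rw [hsplit (fun c => ((B' c) \ (B₂ c)).card), hsplit (fun c => ((B' c) \ (B c)).card),
      heq]
    omega
  exact ⟨B₂, hB₂, reconfigurable_single hB hB₂ hadj, by omega⟩

theorem main_reverse (M : Fin k → FinMatroid α) :
    ∀ (Φ : ℕ) (B B' : Fin k → Finset α), FeasibleSeq M B → FeasibleSeq M B' →
      (∀ i, {x | IsUnionColoop M x} ∩ ((B i : Finset α) : Set α)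
        = {x | IsUnionColoop M x} ∩ ((B' i : Finset α) : Set α)) →
      (∑ c, ((B' c) \ (B c)).card) ≤ Φ → Reconfigurable M B B' := by
  intro Φ
  induction Φ with
  | zero =>
    intro B B' hB hB' hK hΦ
    have hBB : B = B' := by
      funext c
      have h0 : ((B' c) \ (B c)).card = 0 := by
        have := Finset.sum_eq_zero_iff.1 (Nat.le_zero.1 hΦ) c (Finset.mem_univ c)
        exact this
      have hsub : B' c ⊆ B c := by
        intro z hz
        by_contra hz'
        have : z ∈ B' c \ B c := Finset.mem_sdiff.2 ⟨hz, hz'⟩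
        rw [Finset.card_eq_zero.1 h0] at this
        exact absurd this (Finset.notMem_empty z)
      exact (Finset.eq_of_subset_of_card_le hsub
        ((M c).card_eq_of_bases (hB.1 c) (hB'.1 c)).le).symm
    rw [hBB]
    exact reconfigurable_refl hB'
  | succ Φ ih =>
    intro B B' hB hB' hK hΦ
    by_cases heq : ∑ c, ((B' c) \ (B c)).card = 0
    · exact ih B B' hB hB' hK (by omega)
    · have hstep : ∃ B₂ : Fin k → Finset α, FeasibleSeq M B₂ ∧ Reconfigurable M B B₂ ∧
          (∑ c, ((B' c) \ (B₂ c)).card) + 1 ≤ ∑ c, ((B' c) \ (B c)).card := by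
        by_cases hJ : Finset.univ.biUnion B = Finset.univ.biUnion B'
        · -- Case B: tadpole walk
          have hex : ∃ (i : Fin k) (y : α), y ∈ B' i ∧ y ∉ B i := by
            by_contra hcon
            push_neg at hcon
            refine heq (Finset.sum_eq_zero (fun c _ => Finset.card_eq_zero.2 ?_))
            rw [Finset.sdiff_eq_empty_iff_subset]
            intro z hz
            by_contra hz'
            exact hz' (hcon c z hz)
          obtain ⟨i, y, hyB', hyB⟩ := hex
          obtain ⟨W⟩ := exists_tdata hB hB' hJ hK hyB' hyB
          exact W.progress hB hB'
        · exact caseA_step hB hB' hJ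
      obtain ⟨B₂, hB₂, hrec₂, hdec⟩ := hstep
      have hinv := coloop_inter_eq_of_reconfig hrec₂
      have hK₂ : ∀ i, {x | IsUnionColoop M x} ∩ ((B₂ i : Finset α) : Set α)
          = {x | IsUnionColoop M x} ∩ ((B' i : Finset α) : Set α) :=
        fun i => (hinv i).symm.trans (hK i)
      exact reconfigurable_trans hrec₂ (ih B₂ B' hB₂ hB' hK₂ (by omega))

end Main


/-- **Theorem (statement 0).** Let `K` be the set of coloops of `⋁ i, M i`.
Feasible basis sequences `B` and `B'` of `𝕄` satisfy: `B` is reconfigurable to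
`B'` iff `K ∩ B i = K ∩ B' i` for every `i`. -/
theorem basis_seq_reconfigurable_iff_coloops {α : Type u} [DecidableEq α] {k : ℕ}
    (M : Fin k → FinMatroid α) (B B' : Fin k → Finset α)
    (hB : FeasibleSeq M B) (hB' : FeasibleSeq M B') :
    Reconfigurable M B B' ↔
      ∀ i, {x | IsUnionColoop M x} ∩ (B i : Set α) =
        {x | IsUnionColoop M x} ∩ (B' i : Set α) := by
  constructor
  · intro h
    exact coloop_inter_eq_of_reconfig h
  · intro hK
    exact main_reverse M _ B B' hB hB' hK le_rfl
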